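/- arXiv:0708.2439 — 7 statements merged into one kernel-verified Lean document; each statement's English description precedes it below -/
import Mathlib

section
/- Let p be a prime, s ≥ 1, and let y, ȳ be integers coprime to p with y ≡ ȳ (mod p^s). Then for all n ≥ 1, the partial sums G_n(y) = Σ_{j=1}^n y^j/j and G_n(ȳ) = Σ_{j=1}^n ȳ^j/j (viewed as p-adic numbers) satisfy G_n(y) ≡ G_n(ȳ) (mod p^s). -/
open Finset

private lemma step_pow (p : ℕ) (hp : p.Prime) (a b : ℤ) (k : ℕ) (hk : 1 ≤ k)
    (h : (p : ℤ) ^ k ∣ a - b) : (p : ℤ) ^ (k + 1) ∣ a ^ p - b ^ p := by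
  have hd : (p : ℤ) ∣ a - b := dvd_trans (dvd_pow_self _ (by omega)) h
  have hsum : (p : ℤ) ∣ ∑ i ∈ Finset.range p, a ^ i * b ^ (p - 1 - i) := by
    haveI : NeZero p := ⟨hp.ne_zero⟩
    rw [← ZMod.intCast_zmod_eq_zero_iff_dvd]
    push_cast
    have hab : (a : ZMod p) = (b : ZMod p) :=
      (ZMod.intCast_eq_intCast_iff _ _ _).mpr ((Int.modEq_iff_dvd.mpr hd).symm)
    calc (∑ i ∈ Finset.range p, (a : ZMod p) ^ i * (b : ZMod p) ^ (p - 1 - i))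
        = ∑ i ∈ Finset.range p, (b : ZMod p) ^ (p - 1) := by
          refine Finset.sum_congr rfl fun i hi => ?_
          rw [hab, ← pow_add]
          congr 1
          have := Finset.mem_range.mp hi
          omega
      _ = (p : ZMod p) * (b : ZMod p) ^ (p - 1) := by
          rw [Finset.sum_const, Finset.card_range, nsmul_eq_mul]
      _ = 0 := by rw [ZMod.natCast_self, zero_mul]
  have hfac : a ^ p - b ^ p = (∑ i ∈ Finset.range p, a ^ i * b ^ (p - 1 - i)) * (a - b) :=
    (geom_sum₂_mul a b p).symm
  rw [hfac, pow_add, pow_one, mul_comm ((p:ℤ)^k)]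
  exact mul_dvd_mul hsum h

private lemma key_dvd (p : ℕ) (hp : p.Prime) (s : ℕ) (hs : 1 ≤ s) (y ybar : ℤ)
    (hcong : (p : ℤ) ^ s ∣ y - ybar) :
    ∀ j : ℕ, 1 ≤ j → (p : ℤ) ^ (s + j.factorization p) ∣ y ^ j - ybar ^ j := by
  intro j
  induction j using Nat.strong_induction_on with
  | _ j ih =>
    intro hj
    by_cases hpj : p ∣ j
    · obtain ⟨m, rfl⟩ := hpj
      have hm : 1 ≤ m := Nat.pos_of_ne_zero fun h => by subst h; simp at hj
      have hmlt : m < p * m := by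
        have := hp.two_le; nlinarith
      have hih := ih m hmlt hm
      have hstep := step_pow p hp (y ^ m) (ybar ^ m) (s + m.factorization p)
        (by omega) hih
      have hfa : (p * m).factorization p = m.factorization p + 1 := by
        rw [Nat.factorization_mul hp.ne_zero (by omega), Finsupp.add_apply,
          hp.factorization_self, add_comm]
      rw [hfa, show s + (m.factorization p + 1) = s + m.factorization p + 1 by omega]
      rw [mul_comm p m, pow_mul, pow_mul]
      exact hstep
    · rw [Nat.factorization_eq_zero_of_not_dvd hpj, add_zero]
      have : y ^ j ≡ ybar ^ j [ZMOD (p : ℤ) ^ s] := (Int.ModEq.pow j (Int.modEq_iff_dvd.mpr (by simpa using dvd_neg.mpr hcong)))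
      have := Int.ModEq.dvd this
      simpa using (dvd_sub_comm.mp this)

theorem Gn_congruent_mod_pow (p : ℕ) [Fact p.Prime] (s : ℕ) (hs : 1 ≤ s)
    (y ybar : ℤ) (hy : IsCoprime y (p : ℤ)) (hybar : IsCoprime ybar (p : ℤ))
    (hcong : y ≡ ybar [ZMOD (p : ℕ) ^ s]) :
    ∀ n : ℕ, 1 ≤ n →
      ‖((((∑ j ∈ Finset.Icc 1 n, (y : ℚ) ^ j / j) -
          (∑ j ∈ Finset.Icc 1 n, (ybar : ℚ) ^ j / j)) : ℚ) : ℚ_[p])‖ ≤ (p : ℝ) ^ (-(s : ℤ)) := by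
  intro n hn
  have hp := (Fact.out : p.Prime)
  have hdvd : (p : ℤ) ^ s ∣ y - ybar := by
    have := Int.ModEq.dvd hcong
    have := dvd_sub_comm.mp this
    simpa using this
  rw [← Finset.sum_sub_distrib]
  push_cast
  refine IsUltrametricDist.norm_sum_le_of_forall_le_of_nonneg (by positivity) fun j hj => ?_
  obtain ⟨hj1, hjn⟩ := Finset.mem_Icc.mp hj
  set t := j.factorization p with ht
  have hj0 : j ≠ 0 := by omega
  -- rewrite term as integer / integer
  have hkey : (p : ℤ) ^ (s + t) ∣ y ^ j - ybar ^ j :=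
    key_dvd p hp s hs y ybar hdvd j hj1
  have hnum : ‖((y : ℚ_[p]) ^ j - (ybar : ℚ_[p]) ^ j)‖ ≤ (p : ℝ) ^ (-(s + t : ℕ) : ℤ) := by
    have : ((y ^ j - ybar ^ j : ℤ) : ℚ_[p]) = (y : ℚ_[p]) ^ j - (ybar : ℚ_[p]) ^ j := by
      push_cast; ring
    rw [← this]
    exact (Padic.norm_int_le_pow_iff_dvd _ _).mpr hkey
  have hjnorm : ‖(j : ℚ_[p])‖ = (p : ℝ) ^ (-(t : ℤ)) := by
    have hex : p ^ t * (j / p ^ t) = j := Nat.ordProj_mul_ordCompl_eq_self j p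
    have hmnd : ¬ (p : ℤ) ∣ (j / p ^ t : ℕ) := by
      have := Nat.not_dvd_ordCompl hp hj0
      exact_mod_cast fun h => this (Int.ofNat_dvd.mp (by exact_mod_cast h))
    have hm1 : ‖((j / p ^ t : ℕ) : ℚ_[p])‖ = 1 := by
      have hle : ‖(((j / p ^ t : ℕ) : ℤ) : ℚ_[p])‖ ≤ 1 := Padic.norm_int_le_one _
      have hlt : ¬ ‖(((j / p ^ t : ℕ) : ℤ) : ℚ_[p])‖ < 1 := fun h =>
        hmnd (Padic.norm_intCast_lt_one_iff.mp h)
      have : ‖(((j / p ^ t : ℕ) : ℤ) : ℚ_[p])‖ = 1 := le_antisymm hle (not_lt.mp hlt)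
      exact_mod_cast this
    calc ‖(j : ℚ_[p])‖ = ‖((p ^ t * (j / p ^ t) : ℕ) : ℚ_[p])‖ := by rw [hex]
      _ = ‖(p : ℚ_[p])‖ ^ t * ‖((j / p ^ t : ℕ) : ℚ_[p])‖ := by push_cast; rw [norm_mul, norm_pow]
      _ = ((p : ℝ)⁻¹) ^ t * 1 := by rw [Padic.norm_p, hm1]
      _ = (p : ℝ) ^ (-(t : ℤ)) := by rw [mul_one, inv_pow, ← zpow_natCast, ← zpow_neg]
  have hppos : (0 : ℝ) < p := by exact_mod_cast hp.pos
  rw [div_sub_div_same, norm_div, hjnorm]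
  rw [div_le_iff₀ (by positivity)]
  calc ‖(y : ℚ_[p]) ^ j - (ybar : ℚ_[p]) ^ j‖ ≤ (p : ℝ) ^ (-(s + t : ℕ) : ℤ) := hnum
    _ = (p : ℝ) ^ (-(s : ℤ)) * (p : ℝ) ^ (-(t : ℤ)) := by
        rw [← zpow_add₀ (ne_of_gt hppos)]; congr 1; push_cast; ring
end

section
/- Let p be an odd prime, y an integer coprime to p with y ≢ 1 (mod p), n ≥ 0, and k ∈ {0, 1, …, p−1}. Then G_{pn+k}(y^p) ≡ G_n(y^p)/p + y^n · G_k(y) + ((y^n − 1)/(y − 1)) · G_{p−1}(y) (mod p), where G_m(x) = Σ_{j=1}^m x^j/j. -/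
open Finset

section aux

variable (p : ℕ) [hfp : Fact p.Prime]

/-- Fermat's little theorem for integers. -/
private lemma fermat_int (x : ℤ) : (p : ℤ) ∣ x ^ p - x := by
  have := ZMod.pow_card (x : ZMod p)
  rwa [← sub_eq_zero, ← Int.cast_pow, ← Int.cast_sub,
    ZMod.intCast_zmod_eq_zero_iff_dvd] at this

/-- Basic division norm bound. -/
private lemma myNormDivLe (a b : ℤ) (ha : (p : ℤ) ∣ a) (hb : ¬ (p : ℤ) ∣ b) :
    ‖((a : ℚ_[p]) / (b : ℚ_[p]))‖ ≤ (p : ℝ) ^ (-1 : ℤ) := by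
  have hb1 : ‖((b : ℤ) : ℚ_[p])‖ = 1 := by
    refine le_antisymm (Padic.norm_int_le_one b) ?_
    by_contra h
    push_neg at h
    exact hb ((Padic.norm_intCast_lt_one_iff (k := b)).mp h)
  rw [norm_div, hb1, div_one]
  have := (Padic.norm_int_le_pow_iff_dvd a 1).mpr (by simpa using ha)
  simpa using this

/-- Decomposition of the sum over `Icc 1 (p*n+k)`. -/
private lemma decomp (n k : ℕ) (F : ℕ → ℚ) :
    ∑ j ∈ Icc 1 (p * n + k), F j =
      ((∑ i ∈ Icc 1 n, F (p * i)) +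
        ∑ q ∈ range n, ∑ r ∈ Icc 1 (p - 1), F (p * q + r)) +
        ∑ r ∈ Icc 1 k, F (p * n + r) := by
  have hp1 : 1 ≤ p := hfp.out.one_lt.le
  have block : ∀ m t : ℕ, ∑ j ∈ Ioc m (m + t), F j = ∑ r ∈ Ioc 0 t, F (m + r) := by
    intro m t
    rw [show Ioc m (m + t) = Ioc (m + 0) (m + t) by rw [add_zero],
      ← Finset.map_add_left_Ioc, Finset.sum_map]
    rfl
  have hIcc : ∀ m : ℕ, Icc 1 m = Ioc 0 m := by
    intro m; ext x; simp only [mem_Icc, mem_Ioc]; omega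
  simp only [hIcc]
  rw [← Finset.sum_Ioc_consecutive F (Nat.zero_le (p * n)) (Nat.le_add_right _ k), block]
  congr 1
  induction n with
  | zero => simp
  | succ n ih =>
    have hsplit : p * (n + 1) = p * n + p := by ring
    rw [hsplit, ← Finset.sum_Ioc_consecutive F (Nat.zero_le (p * n)) (Nat.le_add_right _ p),
      ih, block]
    have hp' : p - 1 + 1 = p := Nat.succ_pred_eq_of_pos hfp.out.pos
    have hgen : ∀ G : ℕ → ℚ, ∑ r ∈ Ioc 0 p, G r = (∑ r ∈ Ioc 0 (p - 1), G r) + G p := by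
      intro G
      rw [← hp', Finset.sum_Ioc_succ_top (Nat.zero_le _), Nat.add_sub_cancel]
    have hlast := hgen (fun r => F (p * n + r))
    rw [hlast, Finset.sum_Ioc_succ_top (Nat.zero_le n), Finset.sum_range_succ]
    have : F (p * n + p) = F (p * (n + 1)) := by rw [hsplit]
    rw [this]
    ring

/-- Termwise estimate for indices not divisible by `p`. -/
private lemma term2 (y : ℤ) (q r : ℕ) (hr1 : 1 ≤ r) (hrp : r ≤ p - 1) :
    ‖((((y : ℚ) ^ p) ^ (p * q + r) / ((p * q + r : ℕ) : ℚ)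
        - (y : ℚ) ^ q * ((y : ℚ) ^ r / (r : ℚ)) : ℚ) : ℚ_[p])‖ ≤ (p : ℝ) ^ (-1 : ℤ) := by
  have hppos := hfp.out.pos
  have hrp' : r < p := by omega
  set a : ℤ := (r : ℤ) * y ^ (p * (p * q + r)) - ((p * q + r : ℕ) : ℤ) * y ^ (q + r) with ha
  set b : ℕ := (p * q + r) * r with hb
  have hd1 : ((p * q + r : ℕ) : ℚ) ≠ 0 := by
    simp only [Nat.cast_ne_zero]; omega
  have hd2 : ((r : ℕ) : ℚ) ≠ 0 := by simp only [Nat.cast_ne_zero]; omega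
  have key : (((y : ℚ) ^ p) ^ (p * q + r) / ((p * q + r : ℕ) : ℚ)
      - (y : ℚ) ^ q * ((y : ℚ) ^ r / (r : ℚ))) = (a : ℚ) / ((b : ℤ) : ℚ) := by
    rw [← pow_mul, ha, hb]
    push_cast
    field_simp
    ring
  rw [key, show ((((a : ℚ) / ((b : ℤ) : ℚ)) : ℚ) : ℚ_[p])
      = (a : ℚ_[p]) / ((b : ℤ) : ℚ_[p]) by push_cast; ring]
  apply myNormDivLe
  · rw [← ZMod.intCast_zmod_eq_zero_iff_dvd, ha]
    push_cast
    have hpow : ∀ m : ℕ, (y : ZMod p) ^ (p * m) = (y : ZMod p) ^ m := fun m => by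
      rw [mul_comm, pow_mul, ZMod.pow_card]
    rw [hpow, ZMod.natCast_self]
    have hsplit : (y : ZMod p) ^ (p * q + r) = (y : ZMod p) ^ (q + r) := by
      rw [pow_add, pow_add, hpow]
    rw [hsplit]
    ring
  · rw [Int.natCast_dvd_natCast, hb]
    intro h
    have hr : p ∣ r := by
      rcases (Nat.Prime.dvd_mul hfp.out).mp h with h1 | h1
      · exact (Nat.dvd_add_right (Dvd.intro q rfl)).mp h1
      · exact h1
    have := Nat.le_of_dvd (by omega) hr
    omega

/-- Termwise estimate for indices divisible by `p`. -/
private lemma term1 (y : ℤ) (i : ℕ) (hi : 1 ≤ i) :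
    ‖((((y : ℚ) ^ p) ^ (p * i) / ((p * i : ℕ) : ℚ)
        - ((y : ℚ) ^ p) ^ i / ((i : ℚ) * (p : ℚ)) : ℚ) : ℚ_[p])‖ ≤ (p : ℝ) ^ (-1 : ℤ) := by
  have hppos := hfp.out.pos
  have hpR : (p : ℝ) ≠ 0 := by positivity
  set s : ℕ := i.factorization p with hs
  set u : ℕ := i / p ^ s with hu'
  have hu : p ^ s * u = i := Nat.ordProj_mul_ordCompl_eq_self i p
  have hundvd : ¬ p ∣ u := Nat.not_dvd_ordCompl hfp.out (by omega)
  have hupos : 0 < u := by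
    rcases Nat.eq_zero_or_pos u with h | h
    · exfalso; rw [h, mul_zero] at hu; omega
    · exact h
  set a : ℤ := y ^ (p * (p * i)) - y ^ (p * i) with ha
  have hd1 : ((p * i : ℕ) : ℚ) ≠ 0 := by
    simp only [Nat.cast_ne_zero]; positivity
  have hd2 : (i : ℚ) ≠ 0 := by simp only [Nat.cast_ne_zero]; omega
  have hd3 : (p : ℚ) ≠ 0 := by simp only [Nat.cast_ne_zero]; omega
  have key : (((y : ℚ) ^ p) ^ (p * i) / ((p * i : ℕ) : ℚ)
      - ((y : ℚ) ^ p) ^ i / ((i : ℚ) * (p : ℚ)))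
      = (a : ℚ) / ((p : ℚ) * (i : ℚ)) := by
    rw [← pow_mul, ← pow_mul, ha]
    push_cast
    field_simp
  rw [key, show ((((a : ℚ) / ((p : ℚ) * (i : ℚ))) : ℚ) : ℚ_[p])
      = (a : ℚ_[p]) / ((p : ℚ_[p]) * ((i : ℕ) : ℚ_[p])) by push_cast; ring]
  have hadvd : ((p : ℤ)) ^ (s + 2) ∣ a := by
    have hf : (p : ℤ) ∣ (y ^ u) ^ p - y ^ u := fermat_int p (y ^ u)
    have hd := dvd_sub_pow_of_dvd_sub hf (s + 1)
    have e1 : ((y ^ u) ^ p) ^ p ^ (s + 1) = y ^ (p * (p * i)) := by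
      rw [← pow_mul, ← pow_mul]
      congr 1
      rw [← hu]; ring
    have e2 : (y ^ u) ^ p ^ (s + 1) = y ^ (p * i) := by
      rw [← pow_mul]
      congr 1
      rw [← hu]; ring
    rw [e1, e2] at hd
    exact hd
  have hanorm : ‖(a : ℚ_[p])‖ ≤ (p : ℝ) ^ (-((s + 2 : ℕ)) : ℤ) :=
    (Padic.norm_int_le_pow_iff_dvd a (s + 2)).mpr hadvd
  have hu1 : ‖((u : ℕ) : ℚ_[p])‖ = 1 := by
    rw [show ((u : ℕ) : ℚ_[p]) = ((u : ℤ) : ℚ_[p]) by push_cast; ring]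
    refine le_antisymm (Padic.norm_int_le_one _) ?_
    by_contra h
    push_neg at h
    have := (Padic.norm_intCast_lt_one_iff (k := (u : ℤ))).mp h
    exact hundvd (by exact_mod_cast this)
  have hn : ‖((p : ℚ_[p]) * ((i : ℕ) : ℚ_[p]))‖ = (p : ℝ) ^ (-((s + 1 : ℕ)) : ℤ) := by
    rw [show ((i : ℕ) : ℚ_[p]) = (p : ℚ_[p]) ^ s * ((u : ℕ) : ℚ_[p]) by
      rw [← hu]; push_cast; ring]
    rw [norm_mul, norm_mul, Padic.norm_p, Padic.norm_p_pow, hu1, mul_one,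
      ← zpow_neg_one (p : ℝ), ← zpow_add₀ hpR]
    congr 1
    push_cast
    ring
  rw [norm_div, hn, div_le_iff₀ (by positivity)]
  calc ‖(a : ℚ_[p])‖ ≤ (p : ℝ) ^ (-((s + 2 : ℕ)) : ℤ) := hanorm
    _ = (p : ℝ) ^ (-1 : ℤ) * (p : ℝ) ^ (-((s + 1 : ℕ)) : ℤ) := by
        rw [← zpow_add₀ hpR]
        congr 1
        push_cast
        ring

end aux

theorem Gn_recurrence (p : ℕ) [Fact p.Prime] (hp : Odd p) (y : ℤ)
    (hy : IsCoprime y (p : ℤ)) (hy1 : ¬ y ≡ 1 [ZMOD p]) (n k : ℕ) (hk : k ≤ p - 1) :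
    ‖((((∑ j ∈ Finset.Icc 1 (p * n + k), ((y : ℚ) ^ p) ^ j / j) -
        ((∑ j ∈ Finset.Icc 1 n, ((y : ℚ) ^ p) ^ j / j) / p +
          (y : ℚ) ^ n * (∑ j ∈ Finset.Icc 1 k, (y : ℚ) ^ j / j) +
          (((y : ℚ) ^ n - 1) / ((y : ℚ) - 1)) *
            (∑ j ∈ Finset.Icc 1 (p - 1), (y : ℚ) ^ j / j))) : ℚ) : ℚ_[p])‖
      ≤ (p : ℝ) ^ (-1 : ℤ) := by
  classical
  have hppos := (Fact.out : p.Prime).pos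
  have hy1' : (y : ℚ) ≠ 1 := by
    intro h
    have : y = 1 := by exact_mod_cast h
    exact hy1 (by rw [this])
  have hgeom : (((y : ℚ) ^ n - 1) / ((y : ℚ) - 1)) = ∑ q ∈ range n, (y : ℚ) ^ q :=
    (geom_sum_eq hy1' n).symm
  have hA : (∑ j ∈ Icc 1 n, ((y : ℚ) ^ p) ^ j / (j : ℚ)) / (p : ℚ)
      = ∑ i ∈ Icc 1 n, ((y : ℚ) ^ p) ^ i / ((i : ℚ) * (p : ℚ)) := by
    rw [Finset.sum_div]
    exact Finset.sum_congr rfl fun i _ => div_div _ _ _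
  have hC : (y : ℚ) ^ n * (∑ r ∈ Icc 1 k, (y : ℚ) ^ r / (r : ℚ))
      = ∑ r ∈ Icc 1 k, (y : ℚ) ^ n * ((y : ℚ) ^ r / (r : ℚ)) := Finset.mul_sum _ _ _
  have hB : (((y : ℚ) ^ n - 1) / ((y : ℚ) - 1)) * (∑ r ∈ Icc 1 (p - 1), (y : ℚ) ^ r / (r : ℚ))
      = ∑ q ∈ range n, ∑ r ∈ Icc 1 (p - 1), (y : ℚ) ^ q * ((y : ℚ) ^ r / (r : ℚ)) := by
    rw [hgeom, Finset.sum_mul]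
    exact Finset.sum_congr rfl fun q _ => Finset.mul_sum _ _ _
  have hD : ((∑ j ∈ Finset.Icc 1 (p * n + k), ((y : ℚ) ^ p) ^ j / j) -
        ((∑ j ∈ Finset.Icc 1 n, ((y : ℚ) ^ p) ^ j / j) / p +
          (y : ℚ) ^ n * (∑ j ∈ Finset.Icc 1 k, (y : ℚ) ^ j / j) +
          (((y : ℚ) ^ n - 1) / ((y : ℚ) - 1)) *
            (∑ j ∈ Finset.Icc 1 (p - 1), (y : ℚ) ^ j / j)))
      = (∑ i ∈ Icc 1 n, (((y : ℚ) ^ p) ^ (p * i) / ((p * i : ℕ) : ℚ)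
            - ((y : ℚ) ^ p) ^ i / ((i : ℚ) * (p : ℚ))))
        + ((∑ q ∈ range n, ∑ r ∈ Icc 1 (p - 1), (((y : ℚ) ^ p) ^ (p * q + r) / ((p * q + r : ℕ) : ℚ)
            - (y : ℚ) ^ q * ((y : ℚ) ^ r / (r : ℚ))))
          + (∑ r ∈ Icc 1 k, (((y : ℚ) ^ p) ^ (p * n + r) / ((p * n + r : ℕ) : ℚ)
            - (y : ℚ) ^ n * ((y : ℚ) ^ r / (r : ℚ))))) := by
    rw [decomp p n k, hA, hB, hC]
    simp only [Finset.sum_sub_distrib]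
    push_cast
    ring
  rw [hD]
  simp only [Rat.cast_add, Rat.cast_sum]
  refine le_trans (Padic.nonarchimedean _ _) (max_le ?_ ?_)
  · exact IsUltrametricDist.norm_sum_le_of_forall_le_of_nonneg (by positivity)
      (fun i hi => term1 p y i (Finset.mem_Icc.mp hi).1)
  · refine le_trans (Padic.nonarchimedean _ _) (max_le ?_ ?_)
    · refine IsUltrametricDist.norm_sum_le_of_forall_le_of_nonneg (by positivity)
        (fun q _ => ?_)
      exact IsUltrametricDist.norm_sum_le_of_forall_le_of_nonneg (by positivity)
        (fun r hr => term2 p y q r (Finset.mem_Icc.mp hr).1 (Finset.mem_Icc.mp hr).2)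
    · exact IsUltrametricDist.norm_sum_le_of_forall_le_of_nonneg (by positivity)
        (fun r hr => term2 p y n r (Finset.mem_Icc.mp hr).1 ((Finset.mem_Icc.mp hr).2.trans hk))
end

section
/- Let p be an odd prime. Then p divides the numerator of Σ_{j=1}^{p−1} 2^j/j if and only if p is a Wieferich prime, i.e., 2^(p−1) ≡ 1 (mod p²). -/
private lemma choose_pred_cast' (p : ℕ) [hp : Fact p.Prime] :
    ∀ k, k < p → ((p-1).choose k : ZMod p) = (-1)^k := by
  intro k
  induction k with
  | zero => simp
  | succ k ih =>
    intro hk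
    have hk' : k < p := Nat.lt_of_succ_lt hk
    have hkp : ((k+1 : ℕ) : ZMod p) ≠ 0 := by
      rw [Ne, ZMod.natCast_eq_zero_iff]
      exact Nat.not_dvd_of_pos_of_lt (Nat.succ_pos k) hk
    have h := Nat.choose_succ_right_eq (p-1) k
    have hcast : ((p-1).choose (k+1) : ZMod p) * ((k+1 : ℕ) : ZMod p)
        = ((p-1).choose k : ZMod p) * (((p-1) - k : ℕ) : ZMod p) := by
      exact_mod_cast congrArg (Nat.cast : ℕ → ZMod p) h
    have hkle : k ≤ p - 1 := Nat.le_sub_one_of_lt hk'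
    have hsub : (((p-1) - k : ℕ) : ZMod p) = -(((k+1 : ℕ)) : ZMod p) := by
      rw [Nat.cast_sub hkle]
      have : ((p - 1 : ℕ) : ZMod p) = -1 := by
        have : ((p - 1 : ℕ) : ZMod p) = (p : ZMod p) - 1 := by
          rw [Nat.cast_sub hp.out.one_lt.le]; simp
        simpa using this
      rw [this]; push_cast; ring
    rw [ih hk', hsub] at hcast
    exact mul_right_cancel₀ hkp (by rw [hcast]; ring :
      ((p-1).choose (k+1) : ZMod p) * ((k+1 : ℕ) : ZMod p)
        = ((-1)^(k+1) : ZMod p) * ((k+1:ℕ) : ZMod p))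

private lemma dvd_aux' (p : ℕ) [hp : Fact p.Prime] (j : ℕ) (h1 : 1 ≤ j) (h2 : j ≤ p - 1) :
    (p:ℤ)^2 ∣ (p : ℤ) + (-1)^j * j * (p.choose j) := by
  have hjp : j < p := by have := hp.out.two_le; omega
  have hid : (j : ℤ) * (p.choose j) = (p : ℤ) * ((p-1).choose (j-1)) := by
    have h := Nat.add_one_mul_choose_eq (p-1) (j-1)
    have e1 : p - 1 + 1 = p := by have := hp.out.two_le; omega
    have e2 : j - 1 + 1 = j := by omega
    simp only [Nat.succ_eq_add_one, e1, e2] at h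
    have := congrArg (Nat.cast : ℕ → ℤ) h
    push_cast at this
    linarith [this]
  have key : (p:ℤ) + (-1)^j * j * (p.choose j) = (p:ℤ) * (1 + (-1)^j * ((p-1).choose (j-1))) := by
    rw [mul_assoc, hid]; ring
  rw [key, sq]
  apply mul_dvd_mul_left
  have hz : ((1 + (-1)^j * ((p-1).choose (j-1)) : ℤ) : ZMod p) = 0 := by
    push_cast
    rw [choose_pred_cast' p (j-1) (by omega)]
    obtain ⟨m, rfl⟩ : ∃ m, j = m + 1 := ⟨j - 1, by omega⟩
    simp [pow_succ]
    rw [← pow_add, ← two_mul, pow_mul]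
    norm_num
  exact_mod_cast (ZMod.intCast_zmod_eq_zero_iff_dvd _ p).mp hz

private lemma binom_sum' (p : ℕ) (hp : Odd p) (h3 : 3 ≤ p) :
    (∑ j ∈ Finset.Icc 1 (p-1), (-1:ℤ)^j * 2^j * (p.choose j)) = 2^p - 2 := by
  have key : (∑ k ∈ Finset.range (p+1), (2:ℤ)^k * (-1)^(p-k) * (p.choose k)) = 1 := by
    rw [← add_pow (2:ℤ) (-1) p]; norm_num
  rw [Finset.sum_range_succ] at key
  obtain ⟨q, hq⟩ : ∃ q, p = q + 1 := ⟨p - 1, (Nat.succ_pred_eq_of_pos (by omega)).symm⟩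
  subst hq
  rw [Finset.sum_range_succ'] at key
  have hodd : (-1:ℤ)^(q+1) = -1 := hp.neg_one_pow
  simp only [Nat.sub_self, pow_zero, Nat.choose_self, Nat.cast_one, mul_one, one_mul,
    Nat.choose_zero_right, Nat.add_sub_cancel_left, Nat.add_sub_cancel, Nat.sub_zero, hodd] at key
  have hsign : ∀ i ∈ Finset.range q, (2:ℤ)^(i+1) * (-1)^(q+1-(i+1)) * ((q+1).choose (i+1))
      = -((-1)^(i+1) * 2^(i+1) * ((q+1).choose (i+1))) := by
    intro i hi
    have hi' := Finset.mem_range.mp hi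
    have hle : i + 1 ≤ q + 1 := by omega
    have h1 : (-1:ℤ)^(q+1-(i+1)) * (-1)^(i+1) = (-1)^(q+1) := by
      rw [← pow_add, Nat.sub_add_cancel hle]
    have hsq : ((-1:ℤ)^(i+1))^2 = 1 := by
      rw [← pow_mul, mul_comm, pow_mul]; norm_num
    have : (-1:ℤ)^(q+1-(i+1)) = -(-1)^(i+1) := by
      have := congrArg (· * (-1:ℤ)^(i+1)) h1
      simp only [mul_assoc] at this
      rw [← sq, hsq, mul_one, hodd] at this
      rw [this]; ring
    rw [this]; ring
  rw [Finset.sum_congr rfl hsign, Finset.sum_neg_distrib] at key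
  have hIcc : (∑ j ∈ Finset.Icc 1 (q+1-1), (-1:ℤ)^j * 2^j * ((q+1).choose j))
      = ∑ i ∈ Finset.range q, (-1:ℤ)^(i+1) * 2^(i+1) * ((q+1).choose (i+1)) := by
    rw [Nat.add_sub_cancel, ← Finset.Ico_add_one_right_eq_Icc, Finset.sum_Ico_eq_sum_range]
    simp [add_comm 1]
  rw [hIcc]
  linarith [key]

theorem G_pred_two_wieferich (p : ℕ) [Fact p.Prime] (hp : Odd p) :
    ‖(((∑ j ∈ Finset.Icc 1 (p - 1), (2 : ℚ) ^ j / j) : ℚ) : ℚ_[p])‖ ≤ (p : ℝ) ^ (-1 : ℤ) ↔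
      2 ^ (p - 1) ≡ 1 [MOD p ^ 2] := by
  have hprime : p.Prime := Fact.out
  have hodd2 := Nat.odd_iff.mp hp
  have h3 : 3 ≤ p := by have := hprime.two_le; omega
  have hp0 : (p : ℚ_[p]) ≠ 0 := Nat.cast_ne_zero.mpr hprime.pos.ne'
  have hpR : (0:ℝ) < p := by exact_mod_cast hprime.pos
  -- the sum in ℚ_[p]
  have hS : (((∑ j ∈ Finset.Icc 1 (p - 1), (2 : ℚ) ^ j / j) : ℚ) : ℚ_[p])
      = ∑ j ∈ Finset.Icc 1 (p-1), (2:ℚ_[p])^j / (j : ℚ_[p]) := by push_cast; rfl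
  set S : ℚ_[p] := ∑ j ∈ Finset.Icc 1 (p-1), (2:ℚ_[p])^j / (j : ℚ_[p]) with hSdef
  set T : ℚ_[p] := ((2^p - 2 : ℤ) : ℚ_[p]) / (p : ℚ_[p]) with hTdef
  -- norm of 2 is 1
  have h2norm : ‖(2 : ℚ_[p])‖ = 1 := by
    have hle : ‖((2:ℤ) : ℚ_[p])‖ ≤ 1 := Padic.norm_int_le_one 2
    have hnd : ¬ ((p:ℤ) ∣ (2:ℤ)) := by
      intro h; have := Int.le_of_dvd (by norm_num) h; omega
    have hlt := (Padic.norm_intCast_lt_one_iff (k := (2:ℤ))).not.mpr hnd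
    push_cast at hle hlt ⊢
    linarith [lt_or_ge ‖(2:ℚ_[p])‖ 1]
  -- key estimate : ‖S + T‖ ≤ p⁻¹
  have hST : ‖S + T‖ ≤ (p:ℝ) ^ (-1 : ℤ) := by
    have hT : T = ∑ j ∈ Finset.Icc 1 (p-1), (((-1:ℤ)^j * 2^j * (p.choose j) : ℤ) : ℚ_[p]) / (p : ℚ_[p]) := by
      rw [hTdef, ← Finset.sum_div]
      congr 1
      rw [← binom_sum' p hp h3]
      push_cast
      rfl
    rw [hT, hSdef, ← Finset.sum_add_distrib]
    apply IsUltrametricDist.norm_sum_le_of_forall_le_of_nonneg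
    · positivity
    intro j hj
    obtain ⟨hj1, hj2⟩ := Finset.mem_Icc.mp hj
    have hjp : j < p := by omega
    have hjnd : ¬ ((p:ℤ) ∣ (j:ℤ)) := by
      intro h
      have := Int.le_of_dvd (by exact_mod_cast hj1) h
      omega
    have hj0 : (j : ℚ_[p]) ≠ 0 := Nat.cast_ne_zero.mpr (by omega)
    have hjnorm : ‖((j:ℕ) : ℚ_[p])‖ = 1 := by
      have hle : ‖((j:ℤ) : ℚ_[p])‖ ≤ 1 := Padic.norm_int_le_one j
      have hlt := (Padic.norm_intCast_lt_one_iff (k := (j:ℤ))).not.mpr hjnd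
      push_cast at hle hlt ⊢
      linarith [lt_or_ge ‖((j:ℕ):ℚ_[p])‖ 1]
    have heq : (2:ℚ_[p])^j / (j : ℚ_[p]) + (((-1:ℤ)^j * 2^j * (p.choose j) : ℤ) : ℚ_[p]) / (p : ℚ_[p])
        = (2:ℚ_[p])^j * ((((p:ℤ) + (-1)^j * j * (p.choose j) : ℤ)) : ℚ_[p]) / ((j : ℚ_[p]) * (p : ℚ_[p])) := by
      field_simp
      push_cast
      ring
    rw [heq, norm_div, norm_mul, norm_mul, norm_pow, h2norm, hjnorm, Padic.norm_p]
    have hNle : ‖((((p:ℤ) + (-1)^j * j * (p.choose j) : ℤ)) : ℚ_[p])‖ ≤ (p:ℝ) ^ (-(2:ℕ) : ℤ) :=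
      (Padic.norm_int_le_pow_iff_dvd _ 2).mpr (dvd_aux' p j hj1 hj2)
    simp only [one_pow, one_mul]
    rw [div_le_iff₀ (by positivity)]
    calc ‖((((p:ℤ) + (-1)^j * j * (p.choose j) : ℤ)) : ℚ_[p])‖
        ≤ (p:ℝ) ^ (-(2:ℕ) : ℤ) := hNle
      _ = (p:ℝ) ^ (-1 : ℤ) * (p:ℝ)⁻¹ := by
          rw [← zpow_neg_one, ← zpow_add₀ hpR.ne']
          norm_num
  -- norm of T characterizes Wieferich
  have hTiff : ‖T‖ ≤ (p:ℝ) ^ (-1 : ℤ) ↔ 2 ^ (p - 1) ≡ 1 [MOD p ^ 2] := by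
    rw [hTdef, norm_div, Padic.norm_p, div_le_iff₀ (by positivity)]
    have : (p:ℝ) ^ (-1 : ℤ) * (p:ℝ)⁻¹ = (p:ℝ) ^ (-(2:ℕ) : ℤ) := by
      rw [← zpow_neg_one, ← zpow_add₀ hpR.ne']
      norm_num
    rw [this, Padic.norm_int_le_pow_iff_dvd]
    -- (p:ℤ)^2 ∣ 2^p - 2 ↔ Wieferich
    have hfac : (2:ℤ)^p - 2 = 2 * ((2:ℤ)^(p-1) - 1) := by
      have hpe : p = (p-1)+1 := by omega
      have h2p : (2:ℤ)^p = 2^(p-1) * 2 := by rw [hpe]; exact pow_succ 2 (p-1)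
      rw [h2p]; ring
    rw [hfac]
    have hcop : IsCoprime ((p:ℤ)^2) 2 := by
      apply IsCoprime.pow_left
      rw [Int.isCoprime_iff_gcd_eq_one]
      have : Nat.Coprime p 2 := Nat.coprime_two_right.mpr hp
      simpa [Int.gcd] using this
    constructor
    · intro h
      have hdvd : (p:ℤ)^2 ∣ ((2:ℤ)^(p-1) - 1) := hcop.dvd_of_dvd_mul_left h
      have h1le : (1:ℕ) ≤ 2^(p-1) := Nat.one_le_two_pow
      have : ((p^2 : ℕ) : ℤ) ∣ (((2^(p-1) - 1 : ℕ)) : ℤ) := by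
        push_cast [h1le]
        exact_mod_cast hdvd
      rw [Int.natCast_dvd_natCast] at this
      exact ((Nat.modEq_iff_dvd' h1le).mpr this).symm
    · intro h
      have h1le : (1:ℕ) ≤ 2^(p-1) := Nat.one_le_two_pow
      have hdvd : (p^2 : ℕ) ∣ (2^(p-1) - 1 : ℕ) := (Nat.modEq_iff_dvd' h1le).mp h.symm
      have hZ : (p:ℤ)^2 ∣ ((2:ℤ)^(p-1) - 1) := by
        have := Int.natCast_dvd_natCast.mpr hdvd
        push_cast [h1le] at this
        exact_mod_cast this
      exact Dvd.dvd.mul_left hZ 2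
  rw [hS]
  constructor
  · intro h
    apply hTiff.mp
    have : ‖T‖ = ‖(S + T) + (-S)‖ := by ring_nf
    rw [this]
    refine le_trans (Padic.nonarchimedean _ _) (max_le hST ?_)
    rwa [norm_neg]
  · intro h
    have hT' := hTiff.mpr h
    have : ‖S‖ = ‖(S + T) + (-T)‖ := by ring_nf
    rw [this]
    exact le_trans (Padic.nonarchimedean _ _) (max_le hST (by rwa [norm_neg]))
end

section
/- For every integer r ≥ 0 and every x ≠ 1 in a field of characteristic zero, Σ_{j=1}^n j^r x^j = Li_{−r}(x) − x^n · Σ_{m=0}^r C(r,m) n^m Li_{−(r−m)}(x), where Li_{−r}(x) := −δ_{r,0} + Σ_{j=0}^r j! S(r,j) x^j/(1−x)^(j+1) and S(r,j) are Stirling numbers of the second kind. -/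
/-- Stirling numbers of the second kind. -/
def stirling2 : ℕ → ℕ → ℕ
  | 0, 0 => 1
  | 0, _ + 1 => 0
  | _ + 1, 0 => 0
  | r + 1, j + 1 => (j + 1) * stirling2 r (j + 1) + stirling2 r j

/-- The closed form for the polylogarithm of negative integer order `Li_{-r}(x)`. -/
noncomputable def negLi {K : Type*} [Field K] (r : ℕ) (x : K) : K :=
  -(if r = 0 then 1 else 0) +
    ∑ j ∈ Finset.range (r + 1),
      (j.factorial : K) * (stirling2 r j : K) * x ^ j / (1 - x) ^ (j + 1)

open Finset

lemma stirling2_zero_right : ∀ r, stirling2 r 0 = if r = 0 then 1 else 0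
  | 0 => rfl
  | _ + 1 => rfl

lemma stirling2_eq_zero : ∀ {s j : ℕ}, s < j → stirling2 s j = 0
  | 0, _ + 1, _ => rfl
  | s + 1, j + 1, h => by
      have h1 : s < j + 1 := by omega
      have h2 : s < j := by omega
      simp [stirling2, stirling2_eq_zero h1, stirling2_eq_zero h2]

/-- Pascal-rule expansion for sums weighted by binomial coefficients. -/
lemma choose_sum_succ {M : Type*} [AddCommMonoid M] (r : ℕ) (g : ℕ → M) :
    ∑ s ∈ range (r + 2), (r + 1).choose s • g s =
      (∑ s ∈ range (r + 1), r.choose s • g s) +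
        ∑ s ∈ range (r + 1), r.choose s • g (s + 1) := by
  rw [Finset.sum_range_succ' (fun s => (r + 1).choose s • g s)]
  have h1 : ∑ s ∈ range (r + 1), r.choose s • g s
      = (∑ s ∈ range (r + 1), r.choose (s + 1) • g (s + 1)) + r.choose 0 • g 0 := by
    rw [← Finset.sum_range_succ' (fun s => r.choose s • g s) (r + 1),
      Finset.sum_range_succ (fun s => r.choose s • g s) (r + 1)]
    simp
  rw [h1]
  simp only [Nat.choose_succ_succ, add_smul, Finset.sum_add_distrib, Nat.succ_eq_add_one,
    Nat.choose_zero_right]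
  abel

/-- The binomial identity for Stirling numbers of the second kind. -/
lemma stirling2_binom : ∀ r j : ℕ,
    stirling2 (r + 1) (j + 1) = ∑ s ∈ range (r + 1), r.choose s * stirling2 s j
  | 0, j => by simp [stirling2, stirling2_eq_zero (Nat.lt_succ_self j)]
  | r + 1, j => by
    have key := choose_sum_succ (r := r) (g := fun s => stirling2 s j)
    simp only [smul_eq_mul] at key
    rw [key, ← stirling2_binom r j]
    cases j with
    | zero =>
        have e1 : stirling2 (r + 1 + 1) (0 + 1)
            = (0 + 1) * stirling2 (r + 1) (0 + 1) + stirling2 (r + 1) 0 := rfl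
        have e2 : ∀ s : ℕ, stirling2 (s + 1) 0 = 0 := fun s => rfl
        simp [e1, e2]
    | succ j' =>
        have hs : ∀ s ∈ range (r + 1),
            r.choose s * stirling2 (s + 1) (j' + 1)
              = (j' + 1) * (r.choose s * stirling2 s (j' + 1))
                + r.choose s * stirling2 s j' := by
          intro s _
          have e : stirling2 (s + 1) (j' + 1)
              = (j' + 1) * stirling2 s (j' + 1) + stirling2 s j' := rfl
          rw [e]; ring
        rw [Finset.sum_congr rfl hs, Finset.sum_add_distrib, ← Finset.mul_sum,
          ← stirling2_binom r (j' + 1), ← stirling2_binom r j']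
        have e : stirling2 (r + 1 + 1) (j' + 1 + 1)
            = (j' + 1 + 1) * stirling2 (r + 1) (j' + 1 + 1) + stirling2 (r + 1) (j' + 1) := rfl
        rw [e]; ring


/-- The main (non-constant) part of `negLi`. -/
noncomputable def negLiA {K : Type*} [Field K] (r : ℕ) (x : K) : K :=
  ∑ j ∈ Finset.range (r + 1),
    (j.factorial : K) * (stirling2 r j : K) * x ^ j / (1 - x) ^ (j + 1)

lemma negLi_eq {K : Type*} [Field K] (r : ℕ) (x : K) :
    negLi r x = -(if r = 0 then 1 else 0) + negLiA r x := rfl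

lemma negLiA_key {K : Type*} [Field K] (r : ℕ) (x : K) (hx : x ≠ 1) :
    x * ∑ s ∈ range (r + 1), (r.choose s : K) * negLiA s x
      = negLiA r x - (if r = 0 then 1 else 0) := by
  have h1 : (1 : K) - x ≠ 0 := sub_ne_zero.mpr (Ne.symm hx)
  -- extend each inner sum to range (r+1)
  have hext : ∀ s ∈ range (r + 1), (r.choose s : K) * negLiA s x
      = ∑ j ∈ range (r + 1),
          (r.choose s : K) * ((j.factorial : K) * (stirling2 s j : K) * x ^ j
            / (1 - x) ^ (j + 1)) := by
    intro s hs
    rw [negLiA, Finset.mul_sum]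
    refine Finset.sum_subset (Finset.range_subset_range.mpr (by
      simp only [mem_range] at hs; omega)) ?_
    intro j _ hj
    simp only [mem_range, not_lt] at hj
    rw [stirling2_eq_zero (by omega)]
    simp
  rw [Finset.sum_congr rfl hext, Finset.sum_comm, Finset.mul_sum]
  have hinner : ∀ j ∈ range (r + 1),
      x * ∑ s ∈ range (r + 1),
          (r.choose s : K) * ((j.factorial : K) * (stirling2 s j : K) * x ^ j
            / (1 - x) ^ (j + 1))
        = (j.factorial : K) * (stirling2 (r + 1) (j + 1) : K) * x ^ (j + 1)
            / (1 - x) ^ (j + 1) := by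
    intro j _
    have hb : (stirling2 (r + 1) (j + 1) : K)
        = ∑ s ∈ range (r + 1), (r.choose s : K) * (stirling2 s j : K) := by
      rw [stirling2_binom r j]; push_cast; rfl
    rw [hb, Finset.mul_sum, Finset.mul_sum, Finset.sum_mul, Finset.sum_div]
    refine Finset.sum_congr rfl fun s _ => ?_
    rw [pow_succ x j]
    field_simp
  rw [Finset.sum_congr rfl hinner]
  -- now use the Stirling recurrence termwise
  have hrec : ∀ j ∈ range (r + 1),
      (j.factorial : K) * (stirling2 (r + 1) (j + 1) : K) * x ^ (j + 1)
          / (1 - x) ^ (j + 1)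
        = ((j+1).factorial : K) * (stirling2 r (j + 1) : K) * x ^ (j + 1)
            / (1 - x) ^ (j + 1)
          + (j.factorial : K) * (stirling2 r j : K) * x ^ (j + 1)
              / (1 - x) ^ (j + 1) := by
    intro j _
    have e : stirling2 (r + 1) (j + 1)
        = (j + 1) * stirling2 r (j + 1) + stirling2 r j := rfl
    rw [e, ← add_div]
    congr 1
    rw [Nat.factorial_succ]
    push_cast
    ring
  rw [Finset.sum_congr rfl hrec, Finset.sum_add_distrib]
  -- first sum: reindex
  have hS1 : ∑ j ∈ range (r + 1),
      ((j+1).factorial : K) * (stirling2 r (j + 1) : K) * x ^ (j + 1)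
        / (1 - x) ^ (j + 1)
      = (∑ j ∈ range (r + 1),
          (j.factorial : K) * (stirling2 r j : K) * x ^ j / (1 - x) ^ j)
        - (if r = 0 then 1 else 0) := by
    have := Finset.sum_range_succ'
      (fun j => (j.factorial : K) * (stirling2 r j : K) * x ^ j / (1 - x) ^ j) (r + 1)
    rw [Finset.sum_range_succ
      (fun j => (j.factorial : K) * (stirling2 r j : K) * x ^ j / (1 - x) ^ j) (r + 1)]
      at this
    rw [stirling2_eq_zero (Nat.lt_succ_self r)] at this
    simp only [Nat.cast_zero, mul_zero, zero_mul, zero_div, add_zero] at this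
    rw [this]
    simp [stirling2_zero_right]
  rw [hS1]
  -- compare with negLiA termwise
  have hA : negLiA r x = (∑ j ∈ range (r + 1),
      (j.factorial : K) * (stirling2 r j : K) * x ^ j / (1 - x) ^ j)
      + ∑ j ∈ range (r + 1),
        (j.factorial : K) * (stirling2 r j : K) * x ^ (j + 1) / (1 - x) ^ (j + 1) := by
    rw [negLiA, ← Finset.sum_add_distrib]
    refine Finset.sum_congr rfl fun j _ => ?_
    rw [pow_succ x j, pow_succ (1 - x) j]
    have h2 : (1 - x) ^ j ≠ 0 := pow_ne_zero _ h1
    field_simp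
    ring
  rw [hA]
  ring

lemma negLi_succ {K : Type*} [Field K] (r : ℕ) (x : K) (hx : x ≠ 1) :
    x * ∑ m ∈ range (r + 1), (r.choose m : K) * negLi (r - m) x
      = negLi r x - x := by
  have hsplit : ∀ m ∈ range (r + 1), (r.choose m : K) * negLi (r - m) x
      = (r.choose m : K) * (-(if r - m = 0 then (1:K) else 0))
        + (r.choose m : K) * negLiA (r - m) x := by
    intro m _; rw [negLi_eq]; ring
  rw [Finset.sum_congr rfl hsplit, Finset.sum_add_distrib]
  have hdelta : ∑ m ∈ range (r + 1),
      (r.choose m : K) * (-(if r - m = 0 then (1:K) else 0)) = -1 := by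
    rw [Finset.sum_eq_single r]
    · simp
    · intro m hm hmr
      simp only [mem_range] at hm
      rw [if_neg (by omega)]
      simp
    · intro h; exact absurd (self_mem_range_succ r) h
  rw [hdelta]
  have hrefl : ∑ m ∈ range (r + 1), (r.choose m : K) * negLiA (r - m) x
      = ∑ m ∈ range (r + 1), (r.choose m : K) * negLiA m x := by
    rw [← Finset.sum_range_reflect (fun m => (r.choose m : K) * negLiA m x) (r + 1)]
    refine Finset.sum_congr rfl fun m hm => ?_
    simp only [mem_range] at hm
    have hm' : m ≤ r := by omega
    have : r + 1 - 1 - m = r - m := by omega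
    rw [this, Nat.choose_symm hm']
  rw [hrefl, mul_add, negLiA_key r x hx, negLi_eq]
  ring


lemma tri_swap {M : Type*} [AddCommMonoid M] (n : ℕ) (F : ℕ → ℕ → M) :
    ∑ m ∈ range n, ∑ i ∈ range (m + 1), F m i
      = ∑ i ∈ range n, ∑ m ∈ Finset.Ico i n, F m i := by
  simp_rw [Finset.range_eq_Ico]
  exact (Finset.sum_Ico_Ico_comm 0 n fun i m => F m i).symm

lemma negLi_shift {K : Type*} [Field K] (r : ℕ) (x : K) (hx : x ≠ 1) (t : K) :
    ∑ m ∈ range (r + 1), (r.choose m : K) * t ^ m * negLi (r - m) x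
      = x * (t + 1) ^ r
        + x * ∑ m ∈ range (r + 1), (r.choose m : K) * (t + 1) ^ m * negLi (r - m) x := by
  have hbin : ∀ m : ℕ, (t + 1) ^ m = ∑ i ∈ range (m + 1), t ^ i * (m.choose i : K) := by
    intro m; rw [add_pow]; simp
  have hmain : ∑ m ∈ range (r + 1), (r.choose m : K) * (t + 1) ^ m * negLi (r - m) x
      = ∑ i ∈ range (r + 1), (r.choose i : K) * t ^ i
          * ∑ s ∈ range (r - i + 1), ((r - i).choose s : K) * negLi (r - i - s) x := by
    have h2 : ∀ m ∈ range (r + 1), (r.choose m : K) * (t + 1) ^ m * negLi (r - m) x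
        = ∑ i ∈ range (m + 1),
            ((r.choose m : K) * (m.choose i : K)) * t ^ i * negLi (r - m) x := by
      intro m _
      rw [hbin m, Finset.mul_sum, Finset.sum_mul]
      exact Finset.sum_congr rfl fun i _ => by ring
    rw [Finset.sum_congr rfl h2, tri_swap]
    refine Finset.sum_congr rfl fun i hi => ?_
    simp only [mem_range] at hi
    have hi' : i ≤ r := by omega
    rw [Finset.sum_Ico_eq_sum_range]
    have hn : r + 1 - i = r - i + 1 := by omega
    rw [hn, Finset.mul_sum]
    refine Finset.sum_congr rfl fun s hs => ?_
    simp only [mem_range] at hs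
    have hsr : s ≤ r - i := by omega
    have hchoose : r.choose (i + s) * (i + s).choose i
        = r.choose i * (r - i).choose s := by
      rw [Nat.choose_mul (Nat.le_add_right i s), Nat.add_sub_cancel_left]
    have hsub : r - (i + s) = r - i - s := by omega
    rw [hsub, ← Nat.cast_mul, hchoose]
    push_cast
    ring
  have hx2 : ∀ i ∈ range (r + 1),
      x * ((r.choose i : K) * t ^ i
        * ∑ s ∈ range (r - i + 1), ((r - i).choose s : K) * negLi (r - i - s) x)
      = (r.choose i : K) * t ^ i * (negLi (r - i) x - x) := by
    intro i _
    rw [mul_left_comm, negLi_succ (r - i) x hx]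
  rw [hmain, Finset.mul_sum, Finset.sum_congr rfl hx2]
  have hpow : x * (t + 1) ^ r = ∑ i ∈ range (r + 1), (r.choose i : K) * t ^ i * x := by
    rw [hbin r, Finset.mul_sum]
    exact Finset.sum_congr rfl fun i _ => by ring
  have hsplit : ∑ i ∈ range (r + 1), (r.choose i : K) * t ^ i * (negLi (r - i) x - x)
      = (∑ i ∈ range (r + 1), (r.choose i : K) * t ^ i * negLi (r - i) x)
        - ∑ i ∈ range (r + 1), (r.choose i : K) * t ^ i * x := by
    rw [← Finset.sum_sub_distrib]
    exact Finset.sum_congr rfl fun i _ => by ring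
  rw [hsplit, hpow]
  ring

theorem truncated_polylog_formula {K : Type*} [Field K] [CharZero K]
    (r : ℕ) (x : K) (hx : x ≠ 1) (n : ℕ) :
    ∑ j ∈ Finset.Icc 1 n, (j : K) ^ r * x ^ j =
      negLi r x - x ^ n * ∑ m ∈ Finset.range (r + 1),
        (r.choose m : K) * (n : K) ^ m * negLi (r - m) x := by
  induction n with
  | zero =>
      simp only [Nat.cast_zero, pow_zero, one_mul]
      have hR : ∑ m ∈ range (r + 1), (r.choose m : K) * (0 : K) ^ m * negLi (r - m) x
          = negLi r x := by
        rw [Finset.sum_eq_single 0]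
        · simp
        · intro m _ hm
          rw [zero_pow hm]
          ring
        · intro h; exact absurd (Finset.mem_range.mpr (Nat.succ_pos r)) h
      rw [hR]
      simp
  | succ n ih =>
      rw [Finset.sum_Icc_succ_top (by omega : 1 ≤ n + 1), ih]
      have hshift := negLi_shift r x hx (n : K)
      push_cast
      rw [hshift]
      ring
end

section
/- Let p be a prime and y an integer coprime to p. Then for all s ≥ 1 and n ≥ 1, Σ_{j=1}^n (y^(p²·j) − y^(p·j))/(pj), viewed as a p-adic number, is a p-adic integer, and satisfies Σ_{j=1}^n (y^(p²j) − y^(pj))/(pj) ≡ Σ_{k=1}^{n} (α^k p^(2k−1)/k!) Σ_{j=1}^n (y^(pj)/j)·j(j−1)⋯(j−k+1) truncated at k = s−1 (mod p^s), where α = (y^(p(p−1)) − 1)/p². -/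
open Finset

private lemma gn_aux_val_fact (p : ℕ) [Fact p.Prime] (k : ℕ) (hk : 1 ≤ k) :
    padicValNat p (k.factorial) ≤ k - 1 := by
  have hp := (Fact.out : p.Prime)
  have hdig : 1 ≤ (p.digits k).sum := by
    have hne : p.digits k ≠ [] := Nat.digits_ne_nil_iff_ne_zero.mpr (by omega)
    have hlast := Nat.getLast_digit_ne_zero p (show k ≠ 0 by omega)
    have hmem : (p.digits k).getLast hne ∈ p.digits k := List.getLast_mem hne
    calc 1 ≤ (p.digits k).getLast hne := by omega
    _ ≤ (p.digits k).sum := List.single_le_sum (fun x _ => Nat.zero_le x) _ hmem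
  have hleg := sub_one_mul_padicValNat_factorial (p := p) k
  have h2 : padicValNat p k.factorial ≤ (p - 1) * padicValNat p k.factorial :=
    Nat.le_mul_of_pos_left _ (by have := hp.two_le; omega)
  omega

private lemma gn_aux_euler (p : ℕ) [Fact p.Prime] (y : ℤ) (hy : IsCoprime y (p : ℤ)) :
    ((p : ℤ) ^ 2) ∣ y ^ (p * (p - 1)) - 1 := by
  have hp := (Fact.out : p.Prime)
  have hcop : IsCoprime y ((p : ℤ) ^ 2) := hy.pow_right
  obtain ⟨a, b, hab⟩ := hcop
  have hu : IsUnit ((y : ZMod (p ^ 2))) := by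
    apply IsUnit.of_mul_eq_one ((a : ZMod (p ^ 2)))
    have := congrArg (fun z : ℤ => (z : ZMod (p ^ 2))) hab
    push_cast at this
    rw [show ((p : ZMod (p ^ 2)) : ZMod (p^2)) ^ 2 = ((p^2 : ℕ) : ZMod (p^2)) by push_cast; ring,
      ZMod.natCast_self] at this
    linear_combination this
  obtain ⟨u, hu⟩ := hu
  have htot := ZMod.pow_totient u
  have hphi : Nat.totient (p ^ 2) = p * (p - 1) := by
    rw [Nat.totient_prime_pow hp (by norm_num)]
    ring_nf
  have hone : ((y : ZMod (p ^ 2))) ^ (p * (p - 1)) = 1 := by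
    rw [← hu, ← Units.val_pow_eq_pow_val, ← hphi, htot, Units.val_one]
  have h0 : ((y ^ (p * (p - 1)) - 1 : ℤ) : ZMod (p ^ 2)) = 0 := by
    push_cast
    rw [hone]; ring
  rwa [ZMod.intCast_zmod_eq_zero_iff_dvd, Nat.cast_pow] at h0

private lemma gn_aux_prod_choose (p : ℕ) [Fact p.Prime] (j k : ℕ) :
    (∏ i ∈ Finset.range k, ((j : ℚ_[p]) - (i : ℚ_[p]))) =
      (j.choose k : ℚ_[p]) * (k.factorial : ℚ_[p]) := by
  rcases le_or_gt k j with h | h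
  · have hc : ∀ i ∈ Finset.range k, ((j : ℚ_[p]) - (i : ℚ_[p])) = ((j - i : ℕ) : ℚ_[p]) := by
      intro i hi
      have : i ≤ j := le_trans (Nat.le_of_lt_succ (Nat.lt_succ_of_lt (Finset.mem_range.mp hi))) h
      push_cast [Nat.cast_sub this]
      ring
    rw [Finset.prod_congr rfl hc, ← Nat.cast_prod, ← Nat.descFactorial_eq_prod_range,
      Nat.descFactorial_eq_factorial_mul_choose]
    push_cast
    ring
  · rw [Nat.choose_eq_zero_of_lt h]
    rw [Finset.prod_eq_zero (Finset.mem_range.mpr h) (by simp)]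
    simp

private lemma gn_aux_binom {R : Type*} [CommRing R] (x : R) (j m : ℕ) (hj : j ≤ m) :
    ∑ k ∈ Finset.Icc 1 m, (j.choose k : R) * x ^ k = (1 + x) ^ j - 1 := by
  have h1 : (1 + x) ^ j = ∑ k ∈ Finset.range (j + 1), x ^ k * (j.choose k : R) := by
    rw [add_comm]
    simpa using add_pow x 1 j
  have h2 : ∑ k ∈ Finset.range (j + 1), x ^ k * (j.choose k : R)
      = ∑ k ∈ Finset.range (m + 1), x ^ k * (j.choose k : R) := by
    apply Finset.sum_subset (Finset.range_subset_range.mpr (by omega))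
    intro k hk hnk
    rw [Nat.choose_eq_zero_of_lt (by simp at hk hnk ⊢; omega)]
    simp
  have h3 : ∑ k ∈ Finset.range (m + 1), x ^ k * (j.choose k : R)
      = 1 + ∑ k ∈ Finset.Icc 1 m, x ^ k * (j.choose k : R) := by
    rw [show Finset.range (m + 1) = insert 0 (Finset.Icc 1 m) by
      ext a; simp [Finset.mem_range, Finset.mem_Icc]; omega,
      Finset.sum_insert (by simp)]
    simp
  rw [h1, h2, h3]
  rw [Finset.sum_congr rfl (fun k _ => mul_comm ((j.choose k : R)) (x ^ k))]
  ring

private lemma gn_aux_expand (p : ℕ) [Fact p.Prime] (y : ℤ) (m j : ℕ) (hj1 : 1 ≤ j)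
    (hjm : j ≤ m) :
    ((y : ℚ_[p]) ^ (p ^ 2 * j) - (y : ℚ_[p]) ^ (p * j)) / (p * j) =
    ∑ k ∈ Finset.Icc 1 m,
      (((y : ℚ_[p]) ^ (p * (p - 1)) - 1) / (p : ℚ_[p]) ^ 2) ^ k *
        (p : ℚ_[p]) ^ (2 * k - 1) / (k.factorial : ℚ_[p]) *
        ((y : ℚ_[p]) ^ (p * j) / (j : ℚ_[p]) *
          ∏ i ∈ Finset.range k, ((j : ℚ_[p]) - (i : ℚ_[p]))) := by
  have hp := (Fact.out : p.Prime)
  set A : ℚ_[p] := ((y : ℚ_[p]) ^ (p * (p - 1)) - 1) / (p : ℚ_[p]) ^ 2 with hA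
  have hp0 : (p : ℚ_[p]) ≠ 0 := Nat.cast_ne_zero.mpr hp.ne_zero
  have hj0 : (j : ℚ_[p]) ≠ 0 := Nat.cast_ne_zero.mpr (by omega)
  have hx : (p : ℚ_[p]) ^ 2 * A = (y : ℚ_[p]) ^ (p * (p - 1)) - 1 := by
    rw [hA, mul_div_cancel₀ _ (pow_ne_zero 2 hp0)]
  have hpow : (y : ℚ_[p]) ^ (p ^ 2 * j) =
      (y : ℚ_[p]) ^ (p * j) * ((y : ℚ_[p]) ^ (p * (p - 1))) ^ j := by
    rw [← pow_mul, ← pow_add]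
    congr 1
    obtain ⟨q, rfl⟩ : ∃ q, p = q + 1 := ⟨p - 1, by have := hp.two_le; omega⟩
    simp only [Nat.add_sub_cancel]
    ring
  rw [div_eq_iff (mul_ne_zero hp0 hj0), Finset.sum_mul]
  have hterm : ∀ k ∈ Finset.Icc 1 m,
      A ^ k * (p : ℚ_[p]) ^ (2 * k - 1) / (k.factorial : ℚ_[p]) *
        ((y : ℚ_[p]) ^ (p * j) / (j : ℚ_[p]) *
          ∏ i ∈ Finset.range k, ((j : ℚ_[p]) - (i : ℚ_[p]))) * ((p : ℚ_[p]) * j)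
      = (y : ℚ_[p]) ^ (p * j) * ((j.choose k : ℚ_[p]) * ((p : ℚ_[p]) ^ 2 * A) ^ k) := by
    intro k hk
    have hk1 : 1 ≤ k := (Finset.mem_Icc.mp hk).1
    have hf0 : (k.factorial : ℚ_[p]) ≠ 0 := Nat.cast_ne_zero.mpr k.factorial_ne_zero
    have h1 : ((p : ℚ_[p]) ^ 2) ^ k = (p : ℚ_[p]) ^ (2 * k - 1) * p := by
      rw [← pow_mul, ← pow_succ]
      congr 1
      omega
    rw [gn_aux_prod_choose, mul_pow, h1]
    field_simp
  rw [Finset.sum_congr rfl hterm, ← Finset.mul_sum, gn_aux_binom _ _ _ hjm]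
  have h1x : (1 : ℚ_[p]) + (p : ℚ_[p]) ^ 2 * A = (y : ℚ_[p]) ^ (p * (p - 1)) := by
    rw [hx]; ring
  rw [hpow, ← h1x]
  ring

private lemma gn_aux_normA (p : ℕ) [Fact p.Prime] (y : ℤ) (hy : IsCoprime y (p : ℤ)) :
    ‖(((y : ℚ_[p]) ^ (p * (p - 1)) - 1) / (p : ℚ_[p]) ^ 2)‖ ≤ 1 := by
  have hp := (Fact.out : p.Prime)
  have hp0 : (0 : ℝ) < p := by exact_mod_cast hp.pos
  have hnum : ‖((y : ℚ_[p]) ^ (p * (p - 1)) - 1)‖ ≤ (p : ℝ) ^ (-(2 : ℕ) : ℤ) := by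
    have hc : ((y ^ (p * (p - 1)) - 1 : ℤ) : ℚ_[p]) = (y : ℚ_[p]) ^ (p * (p - 1)) - 1 := by
      push_cast; ring
    rw [← hc, Padic.norm_int_le_pow_iff_dvd]
    exact_mod_cast gn_aux_euler p y hy
  rw [norm_div, norm_pow, Padic.norm_p]
  rw [div_le_one (by positivity)]
  calc ‖((y : ℚ_[p]) ^ (p * (p - 1)) - 1)‖ ≤ (p : ℝ) ^ (-(2 : ℕ) : ℤ) := hnum
    _ = ((p : ℝ)⁻¹) ^ 2 := by
      rw [zpow_neg, zpow_natCast, inv_pow]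

private lemma gn_aux_T_le_one (p : ℕ) [Fact p.Prime] (y : ℤ) (n k : ℕ) (hk : 1 ≤ k) :
    ‖∑ j ∈ Finset.Icc 1 n, ((y : ℚ_[p]) ^ (p * j) / (j : ℚ_[p])) *
        ∏ i ∈ Finset.range k, ((j : ℚ_[p]) - (i : ℚ_[p]))‖ ≤ 1 := by
  apply IsUltrametricDist.norm_sum_le_of_forall_le_of_nonneg zero_le_one
  intro j hj
  have hj1 : 1 ≤ j := (Finset.mem_Icc.mp hj).1
  have hj0 : (j : ℚ_[p]) ≠ 0 := Nat.cast_ne_zero.mpr (by omega)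
  obtain ⟨k', rfl⟩ : ∃ k', k = k' + 1 := ⟨k - 1, by omega⟩
  have heq : ((y : ℚ_[p]) ^ (p * j) / (j : ℚ_[p])) *
        ∏ i ∈ Finset.range (k' + 1), ((j : ℚ_[p]) - (i : ℚ_[p]))
      = (y : ℚ_[p]) ^ (p * j) * ∏ i ∈ Finset.range k', ((j : ℚ_[p]) - ((i : ℚ_[p]) + 1)) := by
    rw [Finset.prod_range_succ']
    push_cast
    field_simp
    ring
  rw [heq]
  rw [norm_mul, norm_pow, norm_prod]
  have h1 : ‖(y : ℚ_[p])‖ ^ (p * j) ≤ 1 :=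
    pow_le_one₀ (norm_nonneg _) (Padic.norm_int_le_one y)
  have h2 : ∏ i ∈ Finset.range k', ‖(j : ℚ_[p]) - ((i : ℚ_[p]) + 1)‖ ≤ 1 := by
    apply Finset.prod_le_one
    · intro i _; exact norm_nonneg _
    · intro i _
      have hc : (j : ℚ_[p]) - ((i : ℚ_[p]) + 1) = (((j : ℤ) - (i + 1) : ℤ) : ℚ_[p]) := by
        push_cast; ring
      rw [hc]
      exact Padic.norm_int_le_one _
  calc ‖(y : ℚ_[p])‖ ^ (p * j) * ∏ i ∈ Finset.range k', ‖(j : ℚ_[p]) - ((i : ℚ_[p]) + 1)‖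
      ≤ 1 * 1 := mul_le_mul h1 h2 (Finset.prod_nonneg fun i _ => norm_nonneg _) zero_le_one
    _ = 1 := by norm_num

private lemma gn_aux_ck_norm (p : ℕ) [Fact p.Prime] (y : ℤ) (k : ℕ) (hk : 1 ≤ k)
    (hA : ‖(((y : ℚ_[p]) ^ (p * (p - 1)) - 1) / (p : ℚ_[p]) ^ 2)‖ ≤ 1) :
    ‖(((y : ℚ_[p]) ^ (p * (p - 1)) - 1) / (p : ℚ_[p]) ^ 2) ^ k *
        (p : ℚ_[p]) ^ (2 * k - 1) / (k.factorial : ℚ_[p])‖ ≤ (p : ℝ) ^ (-(k : ℤ)) := by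
  have hp := (Fact.out : p.Prime)
  have hp1 : (1 : ℝ) < p := by exact_mod_cast hp.one_lt
  have hp0 : (0 : ℝ) < p := by linarith
  have hfval := gn_aux_val_fact p k hk
  have hfnorm : ‖((k.factorial : ℚ_[p]))‖ = (p : ℝ) ^ (-(padicValNat p k.factorial : ℤ)) := by
    have h0 : ((k.factorial : ℚ_[p])) ≠ 0 := by
      exact_mod_cast Nat.cast_ne_zero.mpr k.factorial_ne_zero
    rw [Padic.norm_eq_zpow_neg_valuation h0, Padic.valuation_natCast]
  rw [norm_div, norm_mul, norm_pow, norm_pow, Padic.norm_p, hfnorm]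
  have e1 : ((p : ℝ)⁻¹) ^ (2 * k - 1) = (p : ℝ) ^ (-(2 * k - 1 : ℕ) : ℤ) := by
    rw [zpow_neg, zpow_natCast, inv_pow]
  rw [e1, div_eq_mul_inv, ← zpow_neg, neg_neg]
  calc ‖((y:ℚ_[p]) ^ (p * (p - 1)) - 1) / (p : ℚ_[p]) ^ 2‖ ^ k * (p : ℝ) ^ (-(2 * k - 1 : ℕ) : ℤ)
        * (p : ℝ) ^ ((padicValNat p k.factorial : ℤ))
      ≤ 1 * (p : ℝ) ^ (-(2 * k - 1 : ℕ) : ℤ) * (p : ℝ) ^ ((k - 1 : ℕ) : ℤ) := by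
        apply mul_le_mul
        · apply mul_le_mul _ le_rfl (by positivity) zero_le_one
          exact pow_le_one₀ (norm_nonneg _) hA
        · apply zpow_le_zpow_right₀ (le_of_lt hp1)
          exact_mod_cast hfval
        · positivity
        · positivity
    _ = (p : ℝ) ^ (-(k : ℤ)) := by
        rw [one_mul, ← zpow_add₀ (ne_of_gt hp0)]
        congr 1
        omega

theorem Gn_not_rel_prime_part (p : ℕ) [Fact p.Prime] (y : ℤ)
    (hy : IsCoprime y (p : ℤ)) (s n : ℕ) (hs : 1 ≤ s) (hn : 1 ≤ n) :
    ‖∑ j ∈ Finset.Icc 1 n,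
        ((y : ℚ_[p]) ^ (p ^ 2 * j) - (y : ℚ_[p]) ^ (p * j)) / (p * j)‖ ≤ 1 ∧
      ‖(∑ j ∈ Finset.Icc 1 n,
            ((y : ℚ_[p]) ^ (p ^ 2 * j) - (y : ℚ_[p]) ^ (p * j)) / (p * j)) -
          ∑ k ∈ Finset.Icc 1 (s - 1),
            (((y : ℚ_[p]) ^ (p * (p - 1)) - 1) / (p : ℚ_[p]) ^ 2) ^ k *
              (p : ℚ_[p]) ^ (2 * k - 1) / (k.factorial : ℚ_[p]) *
              ∑ j ∈ Finset.Icc 1 n,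
                ((y : ℚ_[p]) ^ (p * j) / (j : ℚ_[p])) *
                  ∏ i ∈ Finset.range k, ((j : ℚ_[p]) - (i : ℚ_[p]))‖ ≤
        (p : ℝ) ^ (-(s : ℤ)) := by
  have hp := (Fact.out : p.Prime)
  have hp1 : (1 : ℝ) < p := by exact_mod_cast hp.one_lt
  have hA := gn_aux_normA p y hy
  set m := max n (s - 1) with hm
  set f : ℕ → ℚ_[p] := fun k =>
    (((y : ℚ_[p]) ^ (p * (p - 1)) - 1) / (p : ℚ_[p]) ^ 2) ^ k *
      (p : ℚ_[p]) ^ (2 * k - 1) / (k.factorial : ℚ_[p]) *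
      ∑ j ∈ Finset.Icc 1 n,
        ((y : ℚ_[p]) ^ (p * j) / (j : ℚ_[p])) *
          ∏ i ∈ Finset.range k, ((j : ℚ_[p]) - (i : ℚ_[p])) with hf
  have hfnorm : ∀ k, 1 ≤ k → ‖f k‖ ≤ (p : ℝ) ^ (-(k : ℤ)) := by
    intro k hk
    rw [hf]
    simp only
    rw [norm_mul]
    calc ‖(((y : ℚ_[p]) ^ (p * (p - 1)) - 1) / (p : ℚ_[p]) ^ 2) ^ k *
          (p : ℚ_[p]) ^ (2 * k - 1) / (k.factorial : ℚ_[p])‖ *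
          ‖∑ j ∈ Finset.Icc 1 n, ((y : ℚ_[p]) ^ (p * j) / (j : ℚ_[p])) *
            ∏ i ∈ Finset.range k, ((j : ℚ_[p]) - (i : ℚ_[p]))‖
        ≤ ((p : ℝ) ^ (-(k : ℤ))) * 1 := by
          apply mul_le_mul (gn_aux_ck_norm p y k hk hA) (gn_aux_T_le_one p y n k hk)
            (norm_nonneg _) (by positivity)
      _ = (p : ℝ) ^ (-(k : ℤ)) := mul_one _
  have hS : ∑ j ∈ Finset.Icc 1 n,
      ((y : ℚ_[p]) ^ (p ^ 2 * j) - (y : ℚ_[p]) ^ (p * j)) / (p * j)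
      = ∑ k ∈ Finset.Icc 1 m, f k := by
    rw [Finset.sum_congr rfl (fun j hj => gn_aux_expand p y m j (Finset.mem_Icc.mp hj).1
      (le_trans (Finset.mem_Icc.mp hj).2 (le_max_left _ _))), Finset.sum_comm]
    exact Finset.sum_congr rfl fun k _ => (Finset.mul_sum _ _ _).symm
  constructor
  · rw [hS]
    apply IsUltrametricDist.norm_sum_le_of_forall_le_of_nonneg zero_le_one
    intro k hk
    calc ‖f k‖ ≤ (p : ℝ) ^ (-(k : ℤ)) := hfnorm k (Finset.mem_Icc.mp hk).1
      _ ≤ (p : ℝ) ^ (0 : ℤ) := by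
          apply zpow_le_zpow_right₀ (le_of_lt hp1)
          omega
      _ = 1 := zpow_zero _
  · have hsplit : ∑ k ∈ Finset.Icc 1 (s - 1), f k + ∑ k ∈ Finset.Icc s m, f k
        = ∑ k ∈ Finset.Icc 1 m, f k := by
      rw [show Finset.Icc 1 (s - 1) = Finset.Ioc 0 (s - 1) by rw [← Finset.Icc_add_one_left_eq_Ioc, zero_add],
        show Finset.Icc s m = Finset.Ioc (s - 1) m by rw [← Finset.Icc_add_one_left_eq_Ioc]; congr 1; omega,
        show Finset.Icc 1 m = Finset.Ioc 0 m by rw [← Finset.Icc_add_one_left_eq_Ioc, zero_add]]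
      exact Finset.sum_Ioc_consecutive _ (Nat.zero_le _) (le_max_right _ _)
    rw [hS, ← hsplit]
    rw [show ∑ k ∈ Finset.Icc 1 (s - 1), f k + ∑ k ∈ Finset.Icc s m, f k
        - ∑ k ∈ Finset.Icc 1 (s - 1), f k = ∑ k ∈ Finset.Icc s m, f k by ring]
    apply IsUltrametricDist.norm_sum_le_of_forall_le_of_nonneg (by positivity)
    intro k hk
    have hks : s ≤ k := (Finset.mem_Icc.mp hk).1
    calc ‖f k‖ ≤ (p : ℝ) ^ (-(k : ℤ)) := hfnorm k (by omega)
      _ ≤ (p : ℝ) ^ (-(s : ℤ)) := by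
          apply zpow_le_zpow_right₀ (le_of_lt hp1)
          omega
end

section
/- Let p ≠ 5 be a prime. Then for all s ≥ 1 and j ≥ 1, the Fibonacci numbers satisfy F_{p^s · j} ≡ (p/5) · F_{p^(s−1) · j} (mod p^s), where (p/5) is the Legendre symbol. -/
instance : Fact (Nat.Prime 5) := ⟨by norm_num⟩

/-- The ring `ℤ[φ] = A[x]/(x²-x-1)` modelled as pairs `a + b·x`. -/
@[ext] structure Gold (A : Type) where
  a : A
  b : A

namespace Gold

variable {A B : Type} [CommRing A] [CommRing B]

instance : Add (Gold A) := ⟨fun x y => ⟨x.a + y.a, x.b + y.b⟩⟩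
instance : Mul (Gold A) :=
  ⟨fun x y => ⟨x.a * y.a + x.b * y.b, x.a * y.b + x.b * y.a + x.b * y.b⟩⟩
instance : Neg (Gold A) := ⟨fun x => ⟨-x.a, -x.b⟩⟩
instance : Zero (Gold A) := ⟨⟨0, 0⟩⟩
instance : One (Gold A) := ⟨⟨1, 0⟩⟩

@[simp] lemma add_a (x y : Gold A) : (x + y).a = x.a + y.a := rfl
@[simp] lemma add_b (x y : Gold A) : (x + y).b = x.b + y.b := rfl
@[simp] lemma mul_a (x y : Gold A) : (x * y).a = x.a * y.a + x.b * y.b := rfl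
@[simp] lemma mul_b (x y : Gold A) : (x * y).b = x.a * y.b + x.b * y.a + x.b * y.b := rfl
@[simp] lemma neg_a (x : Gold A) : (-x).a = -x.a := rfl
@[simp] lemma neg_b (x : Gold A) : (-x).b = -x.b := rfl
@[simp] lemma zero_a : (0 : Gold A).a = 0 := rfl
@[simp] lemma zero_b : (0 : Gold A).b = 0 := rfl
@[simp] lemma one_a : (1 : Gold A).a = 1 := rfl
@[simp] lemma one_b : (1 : Gold A).b = 0 := rfl

instance : CommRing (Gold A) where
  add := (· + ·)
  mul := (· * ·)
  neg := (- ·)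
  zero := 0
  one := 1
  add_assoc x y z := by ext <;> simp <;> ring
  zero_add x := by ext <;> simp
  add_zero x := by ext <;> simp
  add_comm x y := by ext <;> simp <;> ring
  mul_assoc x y z := by ext <;> simp <;> ring
  one_mul x := by ext <;> simp
  mul_one x := by ext <;> simp
  left_distrib x y z := by ext <;> simp <;> ring
  right_distrib x y z := by ext <;> simp <;> ring
  zero_mul x := by ext <;> simp
  mul_zero x := by ext <;> simp
  neg_add_cancel x := by ext <;> simp
  mul_comm x y := by ext <;> simp <;> ring
  nsmul := nsmulRec
  zsmul := zsmulRec

@[simp] lemma sub_a (x y : Gold A) : (x - y).a = x.a - y.a := by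
  rw [sub_eq_add_neg, sub_eq_add_neg]; simp
@[simp] lemma sub_b (x y : Gold A) : (x - y).b = x.b - y.b := by
  rw [sub_eq_add_neg, sub_eq_add_neg]; simp

/-- The constant embedding. -/
def C : A →+* Gold A where
  toFun a := ⟨a, 0⟩
  map_one' := by ext <;> simp
  map_mul' x y := by ext <;> simp
  map_zero' := by ext <;> simp
  map_add' x y := by ext <;> simp

@[simp] lemma C_a (a : A) : (C a).a = a := rfl
@[simp] lemma C_b (a : A) : (C a).b = 0 := rfl

lemma natCast_eq (n : ℕ) : ((n : ℕ) : Gold A) = C (n : A) := (map_natCast C n).symm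

lemma C_dvd_iff {a : A} {z : Gold A} : C a ∣ z ↔ a ∣ z.a ∧ a ∣ z.b := by
  constructor
  · rintro ⟨w, rfl⟩
    exact ⟨⟨w.a, by simp⟩, ⟨w.b, by simp⟩⟩
  · rintro ⟨⟨u, hu⟩, ⟨v, hv⟩⟩
    exact ⟨⟨u, v⟩, by ext <;> simp [hu, hv]⟩

/-- The generator, a root of `x² = x + 1` (the "golden ratio"). -/
def X : Gold A := ⟨0, 1⟩
/-- The conjugate root `1 - X`. -/
def Y : Gold A := ⟨1, -1⟩

@[simp] lemma X_a : (X : Gold A).a = 0 := rfl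
@[simp] lemma X_b : (X : Gold A).b = 1 := rfl

lemma Y_eq : (Y : Gold A) = 1 - X := by ext <;> simp [X, Y]

lemma X_pow (n : ℕ) :
    (X : Gold A) ^ (n + 1) = ⟨(Nat.fib n : A), (Nat.fib (n + 1) : A)⟩ := by
  induction n with
  | zero => simp [X]
  | succ n ih =>
    rw [pow_succ, ih]
    ext <;> simp [X, Nat.fib_add_two] <;> push_cast <;> ring

lemma Y_pow (n : ℕ) :
    (Y : Gold A) ^ (n + 1) = ⟨(Nat.fib (n + 2) : A), -(Nat.fib (n + 1) : A)⟩ := by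
  induction n with
  | zero => simp [Y, Nat.fib_add_two]
  | succ n ih =>
    rw [pow_succ, ih]
    ext <;> simp [Y, Nat.fib_add_two (n := n + 1)] <;> push_cast <;> ring

/-- Componentwise map along a ring hom. -/
def map (f : A →+* B) : Gold A →+* Gold B where
  toFun z := ⟨f z.a, f z.b⟩
  map_one' := by ext <;> simp
  map_mul' x y := by ext <;> simp
  map_zero' := by ext <;> simp
  map_add' x y := by ext <;> simp

@[simp] lemma map_a (f : A →+* B) (z : Gold A) : (map f z).a = f z.a := rfl
@[simp] lemma map_b (f : A →+* B) (z : Gold A) : (map f z).b = f z.b := rfl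

instance {n : ℕ} : CharP (Gold (ZMod n)) n where
  cast_eq_zero_iff m := by
    constructor
    · intro h
      rw [natCast_eq] at h
      have ha := congrArg Gold.a h
      simp only [C_a, zero_a] at ha
      exact (ZMod.natCast_eq_zero_iff m n).mp ha
    · intro h
      rw [natCast_eq, (ZMod.natCast_eq_zero_iff m n).mpr h, map_zero]

end Gold

open Gold

section Base

variable {p : ℕ} [hp : Fact p.Prime]

lemma euler_5 (hp2 : p ≠ 2) (hp5 : p ≠ 5) :
    ((legendreSym 5 p : ℤ) : ZMod p) = (5 : ZMod p) ^ (p / 2) := by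
  have h := legendreSym.quadratic_reciprocity_one_mod_four (p := 5) (q := p)
      (by norm_num) hp2
  rw [← h, legendreSym.eq_pow]
  norm_num

lemma X_pow_card_odd (hp2 : p ≠ 2) (hp5 : p ≠ 5) :
    Gold.C (2 : ZMod p) * (X : Gold (ZMod p)) ^ p =
      Gold.C ((legendreSym 5 p : ℤ) : ZMod p) * (Gold.C 2 * X - 1) + 1 := by
  set u : Gold (ZMod p) := Gold.C 2 * X - 1 with hu
  have hu2 : u ^ 2 = Gold.C 5 := by
    rw [pow_two]
    ext <;> simp [hu] <;> ring
  have hodd : p % 2 = 1 := hp.out.eq_two_or_odd.resolve_left hp2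
  have hps : p = 2 * (p / 2) + 1 := by omega
  have hup : u ^ p = Gold.C ((5 : ZMod p) ^ (p / 2)) * u := by
    calc u ^ p = (u ^ 2) ^ (p / 2) * u := by
          rw [← pow_mul, ← pow_succ]; rw [← hps]
    _ = Gold.C ((5 : ZMod p) ^ (p / 2)) * u := by rw [hu2, map_pow]
  have hfrob : u ^ p = Gold.C 2 * (X : Gold (ZMod p)) ^ p - 1 := by
    have h1 : u = Gold.C 2 * X + (-1) := by rw [hu, sub_eq_add_neg]
    rw [h1, add_pow_char, mul_pow, Odd.neg_one_pow ⟨p / 2, by omega⟩, ← map_pow,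
      ZMod.pow_card, sub_eq_add_neg]
  rw [euler_5 hp2 hp5, ← hup, hfrob, sub_add_cancel]

lemma base_one (hp5 : p ≠ 5) (hl : legendreSym 5 p = 1) :
    Gold.C ((p : ℤ)) ∣ (X : Gold ℤ) ^ p - X := by
  have hp2 : p ≠ 2 := by
    rintro rfl
    push_cast at hl
    rw [show legendreSym 5 (2 : ℤ) = -1 by decide] at hl
    omega
  have key : (X : Gold (ZMod p)) ^ p = X := by
    have h := X_pow_card_odd (p := p) hp2 hp5
    rw [hl] at h
    push_cast at h
    rw [map_one, one_mul, sub_add_cancel] at h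
    have h2 : (2 : ZMod p) ≠ 0 := by
      have : ((2 : ℕ) : ZMod p) ≠ 0 := by
        rw [Ne, ZMod.natCast_eq_zero_iff]
        intro hd
        exact hp2 ((Nat.prime_dvd_prime_iff_eq hp.out (by norm_num)).mp hd)
      simpa using this
    calc (X : Gold (ZMod p)) ^ p
        = Gold.C (2⁻¹ * 2) * X ^ p := by rw [inv_mul_cancel₀ h2, map_one, one_mul]
      _ = Gold.C 2⁻¹ * (Gold.C 2 * X ^ p) := by rw [map_mul, mul_assoc]
      _ = Gold.C 2⁻¹ * (Gold.C 2 * X) := by rw [h]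
      _ = Gold.C (2⁻¹ * 2) * X := by rw [map_mul, mul_assoc]
      _ = X := by rw [inv_mul_cancel₀ h2, map_one, one_mul]
  have hmap : Gold.map (Int.castRingHom (ZMod p)) ((X : Gold ℤ) ^ p - X) = 0 := by
    have hX : Gold.map (Int.castRingHom (ZMod p)) (X : Gold ℤ) = X := by
      ext <;> simp
    rw [map_sub, map_pow, hX, key, sub_self]
  rw [C_dvd_iff]
  constructor
  · rw [← ZMod.intCast_zmod_eq_zero_iff_dvd]
    exact congrArg Gold.a hmap
  · rw [← ZMod.intCast_zmod_eq_zero_iff_dvd]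
    exact congrArg Gold.b hmap

lemma base_neg_one (hp5 : p ≠ 5) (hl : legendreSym 5 p = -1) :
    Gold.C ((p : ℤ)) ∣ (X : Gold ℤ) ^ p - Y := by
  have key : (X : Gold (ZMod p)) ^ p = Y := by
    rcases eq_or_ne p 2 with rfl | hp2
    · show (X : Gold (ZMod 2)) ^ 2 = Y
      have h2 : (-1 : ZMod 2) = 1 := CharTwo.neg_eq 1
      rw [pow_two]
      ext <;> simp [X, Y, h2]
    · have h := X_pow_card_odd (p := p) hp2 hp5
      rw [hl] at h
      push_cast at h
      rw [map_neg, map_one, neg_one_mul, neg_sub] at h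
      have h2 : (2 : ZMod p) ≠ 0 := by
        have : ((2 : ℕ) : ZMod p) ≠ 0 := by
          rw [Ne, ZMod.natCast_eq_zero_iff]
          intro hd
          exact hp2 ((Nat.prime_dvd_prime_iff_eq hp.out (by norm_num)).mp hd)
        simpa using this
      have h' : Gold.C (2 : ZMod p) * X ^ p = Gold.C 2 * (1 - X) := by
        have : (1 : Gold (ZMod p)) - Gold.C 2 * X + 1 = Gold.C 2 * (1 - X) := by
          rw [mul_sub, mul_one]
          have : Gold.C (2 : ZMod p) = 1 + 1 := by
            rw [show (2 : ZMod p) = 1 + 1 by norm_num, map_add, map_one]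
          rw [this]; ring
        rw [h, this]
      rw [Y_eq]
      calc (X : Gold (ZMod p)) ^ p
          = Gold.C (2⁻¹ * 2) * X ^ p := by rw [inv_mul_cancel₀ h2, map_one, one_mul]
        _ = Gold.C 2⁻¹ * (Gold.C 2 * X ^ p) := by rw [map_mul, mul_assoc]
        _ = Gold.C 2⁻¹ * (Gold.C 2 * (1 - X)) := by rw [h']
        _ = Gold.C (2⁻¹ * 2) * (1 - X) := by rw [map_mul, mul_assoc]
        _ = 1 - X := by rw [inv_mul_cancel₀ h2, map_one, one_mul]
  have hmap : Gold.map (Int.castRingHom (ZMod p)) ((X : Gold ℤ) ^ p - Y) = 0 := by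
    have hX : Gold.map (Int.castRingHom (ZMod p)) (X : Gold ℤ) = X := by
      ext <;> simp
    have hY : Gold.map (Int.castRingHom (ZMod p)) (Y : Gold ℤ) = Y := by
      ext <;> simp [Y]
    rw [map_sub, map_pow, hX, hY, key, sub_self]
  rw [C_dvd_iff]
  constructor
  · rw [← ZMod.intCast_zmod_eq_zero_iff_dvd]
    exact congrArg Gold.a hmap
  · rw [← ZMod.intCast_zmod_eq_zero_iff_dvd]
    exact congrArg Gold.b hmap

end Base

lemma main_aux {p : ℕ} {c : Gold ℤ} (h : Gold.C ((p : ℤ)) ∣ (X : Gold ℤ) ^ p - c)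
    {s : ℕ} (hs : 1 ≤ s) (j : ℕ) :
    Gold.C ((p : ℤ) ^ s) ∣ (X : Gold ℤ) ^ (p ^ s * j) - c ^ (p ^ (s - 1) * j) := by
  obtain ⟨t, rfl⟩ : ∃ t, s = t + 1 := ⟨s - 1, (Nat.sub_add_cancel hs).symm⟩
  have h0 : ((p : ℕ) : Gold ℤ) ∣ (X : Gold ℤ) ^ p - c := by
    rwa [natCast_eq]
  have h1 := dvd_sub_pow_of_dvd_sub h0 t
  have h2 : Gold.C ((p : ℤ) ^ (t + 1)) ∣ ((X : Gold ℤ) ^ p) ^ p ^ t - c ^ p ^ t := by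
    rw [map_pow, ← natCast_eq]
    exact h1
  have h3 : ((X : Gold ℤ) ^ p) ^ p ^ t = X ^ p ^ (t + 1) := by
    rw [← pow_mul, ← pow_succ']
  rw [h3] at h2
  have h4 := dvd_trans h2 (sub_dvd_pow_sub_pow ((X : Gold ℤ) ^ p ^ (t + 1)) (c ^ p ^ t) j)
  rw [← pow_mul, ← pow_mul] at h4
  show Gold.C ((p : ℤ) ^ (t + 1)) ∣ (X : Gold ℤ) ^ (p ^ (t + 1) * j) - c ^ (p ^ t * j)
  exact h4

theorem fib_pow_prime_congr (p : ℕ) (hp : p.Prime) (hp5 : p ≠ 5) :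
    ∀ s : ℕ, 1 ≤ s → ∀ j : ℕ, 1 ≤ j →
      (Nat.fib (p ^ s * j) : ℤ) ≡
        legendreSym 5 p * (Nat.fib (p ^ (s - 1) * j) : ℤ) [ZMOD (p : ℕ) ^ s] := by
  haveI : Fact p.Prime := ⟨hp⟩
  intro s hs j hj
  have hppos : 0 < p := hp.pos
  have hN : 1 ≤ p ^ s * j := Nat.one_le_iff_ne_zero.mpr (by positivity)
  have hM : 1 ≤ p ^ (s - 1) * j := Nat.one_le_iff_ne_zero.mpr (by positivity)
  obtain ⟨n, hn⟩ : ∃ n, p ^ s * j = n + 1 := ⟨p ^ s * j - 1, (Nat.sub_add_cancel hN).symm⟩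
  obtain ⟨m, hm⟩ : ∃ m, p ^ (s - 1) * j = m + 1 := ⟨_, (Nat.sub_add_cancel hM).symm⟩
  have hmod : ((p : ℕ) ^ s : ℤ) = (p : ℤ) ^ s := by push_cast; ring
  have h5p : ((p : ℤ) : ZMod 5) ≠ 0 := by
    rw [Ne, ZMod.intCast_zmod_eq_zero_iff_dvd]
    intro hd
    have : (5 : ℕ) ∣ p := by exact_mod_cast hd
    exact hp5 ((Nat.prime_dvd_prime_iff_eq (by norm_num) hp).mp this).symm
  rcases legendreSym.eq_one_or_neg_one (p := 5) (a := (p : ℤ)) h5p with hε | hε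
  · have hd := main_aux (base_one (p := p) hp5 hε) hs j
    have hb : ((p : ℤ) ^ s) ∣ ((Nat.fib (p ^ s * j) : ℤ) - (Nat.fib (p ^ (s - 1) * j) : ℤ)) := by
      have := (C_dvd_iff.mp hd).2
      rw [hn, hm, X_pow, X_pow] at this
      simpa [← hn, ← hm] using this
    rw [hε, one_mul]
    exact Int.modEq_iff_dvd.mpr (by rw [hmod]; exact dvd_sub_comm.mp hb)
  · have hd := main_aux (base_neg_one (p := p) hp5 hε) hs j
    have hb : ((p : ℤ) ^ s) ∣ ((Nat.fib (p ^ s * j) : ℤ) + (Nat.fib (p ^ (s - 1) * j) : ℤ)) := by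
      have := (C_dvd_iff.mp hd).2
      rw [hn, hm, X_pow, Y_pow] at this
      simp only [sub_a, sub_b, sub_neg_eq_add] at this
      rw [← hn, ← hm] at this
      exact this
    rw [hε, neg_one_mul]
    refine Int.modEq_iff_dvd.mpr ?_
    rw [hmod]
    have heq : -(Nat.fib (p ^ (s - 1) * j) : ℤ) - (Nat.fib (p ^ s * j) : ℤ) =
        -((Nat.fib (p ^ s * j) : ℤ) + (Nat.fib (p ^ (s - 1) * j) : ℤ)) := by ring
    rw [heq]
    exact dvd_neg.mpr hb
end

section
/- For every n ≥ 1, Σ_{j=1}^{4n} F_j/j ≡ 0 (mod 5) in the 5-adic sense; that is, ν_5(Σ_{j=1}^{4n} F_j/j) ≥ 1, where F_j are Fibonacci numbers. -/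
open Nat

private def cc (j : ℕ) : ℤ :=
  if j % 4 = 1 then 1 else if j % 4 = 2 then 3 else if j % 4 = 3 then 4 else 2


private lemma cassini' (k : ℕ) :
    (fib (k+1) : ℤ)^2 - fib (k+1) * fib k - (fib k : ℤ)^2 = (-1)^k := by
  induction k with
  | zero => simp
  | succ k ih =>
    have h : (fib (k+2) : ℤ) = fib k + fib (k+1) := by
      rw [fib_add_two]; push_cast; ring
    rw [h]
    linear_combination -ih

private lemma fib_five_mul (m : ℕ) :
    (fib (5*m) : ℤ) = 5 * fib m + 25 * (fib m)^3 * ((fib m)^2 + (-1)^m) := by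
  cases m with
  | zero => simp
  | succ k =>
    have hc := cassini' k
    have ht : ((-1:ℤ)^k)^2 = 1 := by
      rw [← pow_mul, mul_comm, pow_mul]; norm_num
    have h55 : 5*(k+1) = 5*k+5 := by ring
    rw [h55]
    have h1 : (fib (2*k+1) : ℤ) = fib k * fib k + fib (k+1) * fib (k+1) := by
      have := fib_add k k
      rw [show k+k+1 = 2*k+1 by ring] at this
      exact_mod_cast this
    have h2 : (fib (2*k+2) : ℤ) = fib k * fib (k+1) + fib (k+1) * (fib k + fib (k+1)) := by
      have := fib_add k (k+1)
      rw [show k+(k+1)+1 = 2*k+2 by ring] at this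
      have h2' : (fib (k+2) : ℤ) = fib k + fib (k+1) := by
        rw [fib_add_two]; push_cast; ring
      push_cast [this]
      rw [h2']
    have h3 : (fib (4*k+3) : ℤ) = fib (2*k+1) * fib (2*k+1) + fib (2*k+2) * fib (2*k+2) := by
      have := fib_add (2*k+1) (2*k+1)
      rw [show (2*k+1)+(2*k+1)+1 = 4*k+3 by ring] at this
      rw [show 2*k+1+1 = 2*k+2 by ring] at this
      exact_mod_cast this
    have h4 : (fib (4*k+4) : ℤ) = fib (2*k+1) * fib (2*k+2)
        + fib (2*k+2) * (fib (2*k+1) + fib (2*k+2)) := by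
      have := fib_add (2*k+1) (2*k+2)
      rw [show (2*k+1)+(2*k+2)+1 = 4*k+4 by ring, show 2*k+1+1 = 2*k+2 by ring] at this
      have h23 : (fib (2*k+3) : ℤ) = fib (2*k+1) + fib (2*k+2) := by
        rw [show 2*k+3 = (2*k+1)+2 by ring, fib_add_two]; push_cast; ring
      push_cast [this]
      rw [show 2*k+2+1 = 2*k+3 by ring, h23]
    have h5 : (fib (5*k+5) : ℤ) = fib k * fib (4*k+4)
        + fib (k+1) * (fib (4*k+3) + fib (4*k+4)) := by
      have := fib_add k (4*k+4)
      rw [show k+(4*k+4)+1 = 5*k+5 by ring] at this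
      have h45 : (fib (4*k+5) : ℤ) = fib (4*k+3) + fib (4*k+4) := by
        rw [show 4*k+5 = (4*k+3)+2 by ring, fib_add_two]; push_cast; ring
      push_cast [this]
      rw [show 4*k+4+1 = 4*k+5 by ring, h45]
    rw [h5, h4, h3, h2, h1]
    set a : ℤ := (fib k : ℤ)
    set b : ℤ := (fib (k+1) : ℤ)
    linear_combination (5*b*((b^2-a*b-a^2) + (-1:ℤ)^k) - 25*b^3) * hc + 5*b*ht

-- periodicity of fib mod 5 with period 20, in ZMod 5
private lemma fib_mod5_period (q r : ℕ) : ((fib (20*q + r) : ZMod 5)) = (fib r : ZMod 5) := by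
  induction q with
  | zero => simp
  | succ q ih =>
    have h : 20*(q+1) + r = 19 + (20*q + r) + 1 := by ring
    rw [h, fib_add]
    push_cast
    have h19 : (fib 19 : ZMod 5) = 1 := by decide
    have h20 : (fib 20 : ZMod 5) = 0 := by decide
    rw [h19, h20, ih]
    ring

private lemma dvd_base (j : ℕ) (h5 : j % 5 ≠ 0) : (5:ℤ) ∣ (fib j : ℤ) - cc j * j := by
  suffices h : (((fib j : ℤ) - cc j * j : ℤ) : ZMod 5) = 0 by
    exact_mod_cast (ZMod.intCast_zmod_eq_zero_iff_dvd _ 5).mp h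
  push_cast
  have hj : j = 20 * (j / 20) + j % 20 := by omega
  have hfib : (fib j : ZMod 5) = (fib (j % 20) : ZMod 5) := by
    conv_lhs => rw [hj]
    exact fib_mod5_period _ _
  have hjz : (j : ZMod 5) = ((j % 20 : ℕ) : ZMod 5) := by
    rw [← ZMod.natCast_mod j 5, ← ZMod.natCast_mod (j % 20) 5,
      show j % 20 % 5 = j % 5 from by omega]
  have hcc : cc j = cc (j % 20) := by
    have h4 : j % 4 = (j % 20) % 4 := by omega
    simp only [cc, h4]
  rw [hfib, hjz, hcc]
  have hr : j % 20 < 20 := by omega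
  have hr5 : (j % 20) % 5 ≠ 0 := by omega
  set r := j % 20 with hrdef
  clear_value r
  interval_cases r <;> first | (exfalso; omega) | decide

private lemma main_bound : ∀ j : ℕ, 1 ≤ j →
    ‖(fib j : ℚ_[5]) / (j : ℚ_[5]) - ((cc j : ℤ) : ℚ_[5])‖ ≤ (5:ℝ)^(-1:ℤ) := by
  intro j
  induction j using Nat.strong_induction_on with
  | _ j ih =>
    intro hj
    by_cases h5 : j % 5 = 0
    · obtain ⟨m, rfl⟩ : ∃ m, j = 5*m := ⟨j/5, by omega⟩
      have hm1 : 1 ≤ m := by omega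
      have hmlt : m < 5*m := by omega
      have IH := ih m hmlt hm1
      have hm0 : (m : ℚ_[5]) ≠ 0 := Nat.cast_ne_zero.mpr (by omega)
      have hcc : cc (5*m) = cc m := by
        have h4 : (5*m) % 4 = m % 4 := by omega
        simp only [cc, h4]
      have keyQ : (fib (5*m) : ℚ_[5])
          = 5 * fib m + 25 * (fib m : ℚ_[5])^3 * ((fib m : ℚ_[5])^2 + (-1)^m) := by
        exact_mod_cast congrArg (fun z : ℤ => (z : ℚ_[5])) (fib_five_mul m)
      have h5m : ((5*m : ℕ) : ℚ_[5]) = 5 * m := by push_cast; ring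
      have E : (fib (5*m) : ℚ_[5]) / ((5*m : ℕ) : ℚ_[5]) - ((cc (5*m) : ℤ) : ℚ_[5])
          = ((fib m : ℚ_[5]) / m - cc m)
            + 5 * ((fib m : ℚ_[5]) / m) * ((fib m : ℚ_[5])^2 * ((fib m : ℚ_[5])^2 + (-1)^m)) := by
        rw [h5m, keyQ, hcc]
        field_simp
        ring
      have hint : ‖(fib m : ℚ_[5])^2 * ((fib m : ℚ_[5])^2 + (-1)^m)‖ ≤ 1 := by
        have hcast : (fib m : ℚ_[5])^2 * ((fib m : ℚ_[5])^2 + (-1)^m)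
            = (((fib m : ℤ)^2 * ((fib m : ℤ)^2 + (-1)^m) : ℤ) : ℚ_[5]) := by push_cast; ring
        rw [hcast]; exact Padic.norm_int_le_one _
      have hdiv : ‖(fib m : ℚ_[5]) / m‖ ≤ 1 := by
        have hsplit : (fib m : ℚ_[5]) / m
            = ((fib m : ℚ_[5]) / m - ((cc m : ℤ) : ℚ_[5])) + ((cc m : ℤ) : ℚ_[5]) := by ring
        rw [hsplit]
        refine le_trans (Padic.nonarchimedean _ _) (max_le ?_ ?_)
        · refine le_trans IH ?_
          rw [zpow_neg_one]
          norm_num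
        · exact Padic.norm_int_le_one _
      have h5norm : ‖(5 : ℚ_[5])‖ = (5:ℝ)^(-1:ℤ) := by
        have := Padic.norm_p (p := 5)
        rw [zpow_neg_one]
        exact_mod_cast this
      have hsecond : ‖5 * ((fib m : ℚ_[5]) / m)
          * ((fib m : ℚ_[5])^2 * ((fib m : ℚ_[5])^2 + (-1)^m))‖ ≤ (5:ℝ)^(-1:ℤ) := by
        rw [norm_mul, norm_mul]
        calc ‖(5:ℚ_[5])‖ * ‖(fib m : ℚ_[5]) / m‖ * ‖(fib m : ℚ_[5])^2 * ((fib m : ℚ_[5])^2 + (-1)^m)‖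
            ≤ ‖(5:ℚ_[5])‖ * 1 * 1 := by
              gcongr <;> simp [norm_nonneg]
          _ = (5:ℝ)^(-1:ℤ) := by rw [mul_one, mul_one, h5norm]
      rw [E]
      exact le_trans (Padic.nonarchimedean _ _) (max_le IH hsecond)
    · have hnd : ¬ ((5:ℤ) ∣ (j:ℤ)) := by
        intro hd
        have : (5:ℕ) ∣ j := by exact_mod_cast hd
        omega
      have hne : (j : ℚ_[5]) ≠ 0 := Nat.cast_ne_zero.mpr (by omega)
      have hjnorm : ‖(j : ℚ_[5])‖ = 1 := by
        have hle : ‖((j:ℤ) : ℚ_[5])‖ ≤ 1 := Padic.norm_int_le_one _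
        have hlt := (Padic.norm_intCast_lt_one_iff (p := 5) (k := (j:ℤ)))
        have hcast : ((j:ℤ) : ℚ_[5]) = (j : ℚ_[5]) := by push_cast; ring
        rw [hcast] at hle hlt
        rcases lt_or_eq_of_le hle with h | h
        · exact absurd (hlt.mp h) (by exact_mod_cast hnd)
        · exact h
      have E : (fib j : ℚ_[5]) / j - ((cc j : ℤ) : ℚ_[5])
          = (((fib j : ℤ) - cc j * j : ℤ) : ℚ_[5]) / (j : ℚ_[5]) := by
        rw [eq_div_iff hne]
        push_cast
        field_simp
      rw [E, norm_div, hjnorm, div_one]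
      have := (Padic.norm_int_le_pow_iff_dvd (p := 5) ((fib j : ℤ) - cc j * j) 1).mpr
        (by simpa using dvd_base j h5)
      simpa using this

private lemma cc_sum (n : ℕ) : ∑ j ∈ Finset.Icc 1 (4*n), cc j = 10 * n := by
  induction n with
  | zero => simp
  | succ n ih =>
    rw [show 4*(n+1) = (4*n+3)+1 by ring, Finset.sum_Icc_succ_top (by omega),
      show 4*n+3 = (4*n+2)+1 by ring, Finset.sum_Icc_succ_top (by omega),
      show 4*n+2 = (4*n+1)+1 by ring, Finset.sum_Icc_succ_top (by omega),
      show 4*n+1 = (4*n)+1 by ring, Finset.sum_Icc_succ_top (by omega), ih]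
    have c1 : cc (4*n+1) = 1 := by
      have h : (4*n+1) % 4 = 1 := by omega
      simp [cc, h]
    have c2 : cc (4*n+1+1) = 3 := by
      have h : (4*n+1+1) % 4 = 2 := by omega
      simp [cc, h]
    have c3 : cc (4*n+2+1) = 4 := by
      have h : (4*n+2+1) % 4 = 3 := by omega
      simp [cc, h]
    have c4 : cc (4*n+3+1) = 2 := by
      have h : (4*n+3+1) % 4 = 0 := by omega
      simp [cc, h]
    rw [c1, c2, c3, c4]
    push_cast
    ring

theorem fib_harmonic_sum_mod_five (n : ℕ) (hn : 1 ≤ n) :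
    ‖(((∑ j ∈ Finset.Icc 1 (4 * n), (Nat.fib j : ℚ) / j) : ℚ) : ℚ_[5])‖ ≤
      (5 : ℝ) ^ (-1 : ℤ) := by
  have key : (((∑ j ∈ Finset.Icc 1 (4 * n), (Nat.fib j : ℚ) / j : ℚ)) : ℚ_[5])
      = (∑ j ∈ Finset.Icc 1 (4*n), ((fib j : ℚ_[5]) / j - ((cc j : ℤ) : ℚ_[5])))
        + ((10 * n : ℤ) : ℚ_[5]) := by
    push_cast
    rw [Finset.sum_sub_distrib]
    have : ∑ j ∈ Finset.Icc 1 (4*n), ((cc j : ℤ) : ℚ_[5]) = ((10 * n : ℤ) : ℚ_[5]) := by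
      rw [← cc_sum n]
      push_cast
      ring
    rw [this]
    push_cast
    ring
  rw [key]
  refine le_trans (Padic.nonarchimedean _ _) (max_le ?_ ?_)
  · refine IsUltrametricDist.norm_sum_le_of_forall_le_of_nonneg (by positivity) ?_
    intro i hi
    exact main_bound i (Finset.mem_Icc.mp hi).1
  · have := (Padic.norm_int_le_pow_iff_dvd (p := 5) (10 * n) 1).mpr
      (by rw [pow_one]; exact ⟨2*n, by ring⟩)
    simpa using this
end
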